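/- arXiv:2009.04900 — 3 statements merged into one kernel-verified Lean document; each statement's English description precedes it below -/
import Mathlib

section
/- Let P_{S5}(x) = 1 + Σ_{n≥1} |L_{S5}(n)| xⁿ be the formal power series in x over ℚ counting the paths in L_{S5}(n). Then 2x(x−1) · P_{S5}(x) = 2x − 1 + √(1−8x+12x²−4x³), where the square root denotes the unique formal power series with constant term 1 whose square is 1−8x+12x²−4x³. -/
/-- A lattice path from `(0,0)` to `(2n,0)` with steps in `S` that never goes
below the x-axis, encoded as the list of its steps. -/
def IsPath (S : Set (ℤ × ℤ)) (n : ℕ) (p : List (ℤ × ℤ)) : Prop :=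
  (∀ s ∈ p, s ∈ S) ∧
  (p.map Prod.fst).sum = 2 * n ∧
  (p.map Prod.snd).sum = 0 ∧
  ∀ q : List (ℤ × ℤ), q <+: p → 0 ≤ (q.map Prod.snd).sum

def S1 : Set (ℤ × ℤ) := {(1, 1), (1, -1)}
def S2 : Set (ℤ × ℤ) := {s | ∃ r : ℤ, 0 < r ∧ (s = (r, r) ∨ s = (r, -r))}
def S3 : Set (ℤ × ℤ) := {(1, 1), (1, -1), (2, 0)}
def S4 : Set (ℤ × ℤ) := {s | ∃ r : ℤ, 0 < r ∧ (s = (r, r) ∨ s = (r, -r) ∨ s = (2 * r, 0))}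
def S5 : Set (ℤ × ℤ) := {s | s = (1, 1) ∨ s = (1, -1) ∨ ∃ r : ℤ, 0 < r ∧ s = (2 * r, 0)}
def S6 : Set (ℤ × ℤ) := {s | (∃ r : ℤ, 0 < r ∧ (s = (r, r) ∨ s = (r, -r))) ∨ s = (2, 0)}

/-- Number of runs: vertices lying between two consecutive steps of the same kind. -/
def runs (p : List (ℤ × ℤ)) : ℕ :=
  (p.zip p.tail).countP (fun q => q.1 == q.2)

/-- Number of diagonal runs: vertices between two consecutive equal non-horizontal steps. -/
def dr (p : List (ℤ × ℤ)) : ℕ :=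
  (p.zip p.tail).countP (fun q => q.1 == q.2 && q.1.2 != 0)

/-- Number of horizontal runs: vertices between two consecutive horizontal steps. -/
def hr (p : List (ℤ × ℤ)) : ℕ :=
  (p.zip p.tail).countP (fun q => q.1 == q.2 && q.1.2 == 0)

/-- The path has no horizontal step lying on the x-axis. -/
def NoFlatOnAxis (p : List (ℤ × ℤ)) : Prop :=
  ∀ q s, q ++ [s] <+: p → s.2 = 0 → (q.map Prod.snd).sum ≠ 0


namespace GFS5

def W (p : List (ℤ × ℤ)) : ℤ := (p.map Prod.fst).sum
def H (p : List (ℤ × ℤ)) : ℤ := (p.map Prod.snd).sum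

@[simp] lemma W_nil : W [] = 0 := rfl
@[simp] lemma H_nil : H [] = 0 := rfl
@[simp] lemma W_cons (s) (p) : W (s :: p) = s.1 + W p := by simp [W]
@[simp] lemma H_cons (s) (p) : H (s :: p) = s.2 + H p := by simp [H]
@[simp] lemma W_singleton (s) : W [s] = s.1 := by simp [W]
@[simp] lemma H_singleton (s) : H [s] = s.2 := by simp [H]
@[simp] lemma W_append (x y) : W (x ++ y) = W x + W y := by simp [W]
@[simp] lemma H_append (x y) : H (x ++ y) = H x + H y := by simp [H]

lemma fst_pos {s : ℤ × ℤ} (hs : s ∈ S5) : 1 ≤ s.1 := by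
  rcases hs with h | h | ⟨r, hr, h⟩ <;> subst h <;> simp <;> omega

lemma snd_cases {s : ℤ × ℤ} (hs : s ∈ S5) : s.2 = 1 ∨ s.2 = -1 ∨ s.2 = 0 := by
  rcases hs with h | h | ⟨r, hr, h⟩ <;> subst h <;> simp

lemma snd_neg {s : ℤ × ℤ} (hs : s ∈ S5) (h : s.2 = -1) : s = (1, -1) := by
  rcases hs with h' | h' | ⟨r, hr, h'⟩ <;> subst h' <;> simp_all

lemma parity {p : List (ℤ × ℤ)} (hp : ∀ s ∈ p, s ∈ S5) : (2 : ℤ) ∣ (W p - H p) := by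
  induction p with
  | nil => simp
  | cons a t ih =>
    have ha := hp a (by simp)
    have ht := ih (fun s hs => hp s (by simp [hs]))
    have : (2:ℤ) ∣ (a.1 - a.2) := by
      rcases ha with h | h | ⟨r, hr, h⟩ <;> subst h <;> simp <;> omega
    simp only [W_cons, H_cons]
    omega

lemma W_nonneg {p : List (ℤ × ℤ)} (hp : ∀ s ∈ p, s ∈ S5) : 0 ≤ W p := by
  induction p with
  | nil => simp
  | cons a t ih =>
    have := fst_pos (hp a (by simp))
    have := ih (fun s hs => hp s (by simp [hs]))
    simp only [W_cons]; omega

lemma prefix_iff {p : List (ℤ × ℤ)} :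
    (∀ q : List (ℤ × ℤ), q <+: p → 0 ≤ (q.map Prod.snd).sum) ↔ ∀ i, 0 ≤ H (p.take i) := by
  constructor
  · intro h i; exact h _ (List.take_prefix i p)
  · intro h q hq
    have := List.prefix_iff_eq_take.mp hq
    rw [this]; exact h _

lemma isPath_iff {n : ℕ} {p : List (ℤ × ℤ)} :
    IsPath S5 n p ↔ (∀ s ∈ p, s ∈ S5) ∧ W p = 2 * n ∧ H p = 0 ∧ ∀ i, 0 ≤ H (p.take i) := by
  unfold IsPath
  rw [prefix_iff]
  rfl

lemma path_zero {p : List (ℤ × ℤ)} (hp : IsPath S5 0 p) : p = [] := by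
  rw [isPath_iff] at hp
  obtain ⟨hS, hW, -, -⟩ := hp
  cases p with
  | nil => rfl
  | cons a t =>
    exfalso
    have h1 := fst_pos (hS a (by simp))
    have h2 := W_nonneg (p := t) (fun s hs => hS s (by simp [hs]))
    simp only [W_cons] at hW
    omega

lemma isPath_flat {r m : ℕ} {t : List (ℤ × ℤ)} (hr : 1 ≤ r) (ht : IsPath S5 m t) :
    IsPath S5 (r + m) (((2 * r : ℤ), 0) :: t) := by
  rw [isPath_iff] at ht ⊢
  obtain ⟨hS, hW, hH, hpre⟩ := ht
  refine ⟨?_, ?_, ?_, ?_⟩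
  · intro s hs
    rcases List.mem_cons.mp hs with h | h
    · subst h; right; right; exact ⟨r, by exact_mod_cast hr, rfl⟩
    · exact hS s h
  · simp only [W_cons, hW]; push_cast; ring
  · simp [hH]
  · intro i
    cases i with
    | zero => simp
    | succ j => simpa using hpre j

lemma isPath_up {k m : ℕ} {q t : List (ℤ × ℤ)} (hq : IsPath S5 k q) (ht : IsPath S5 m t) :
    IsPath S5 (k + m + 1) ((1, 1) :: (q ++ (1, -1) :: t)) := by
  rw [isPath_iff] at hq ht ⊢
  obtain ⟨hS, hW, hH, hpre⟩ := hq
  obtain ⟨hS', hW', hH', hpre'⟩ := ht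
  refine ⟨?_, ?_, ?_, ?_⟩
  · intro s hs
    simp only [List.mem_cons, List.mem_append] at hs
    rcases hs with h | h | h | h
    · subst h; left; rfl
    · exact hS s h
    · subst h; right; left; rfl
    · exact hS' s h
  · simp only [W_cons, W_append, W_cons, hW, hW']; push_cast; ring
  · simp [hH, hH']
  · intro i
    cases i with
    | zero => simp
    | succ j =>
      have e : ((1:ℤ), (1:ℤ)) :: (q ++ (1, -1) :: t) = [((1:ℤ),(1:ℤ))] ++ q ++ [((1:ℤ),(-1:ℤ))] ++ t := by simp
      rw [e]
      rw [List.take_append, List.take_append,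
        List.take_append]
      simp only [H_append]
      have h1 : 0 ≤ H (List.take j q) := hpre j
      have h2 : -1 ≤ H (List.take (j + 1 - (1 + q.length)) [((1:ℤ),(-1:ℤ))]) := by
        rcases Nat.eq_zero_or_pos (j + 1 - (1 + q.length)) with h | h
        · simp [h]
        · rw [List.take_of_length_le (by simp; omega)]; simp [H]
      have h3 : 0 ≤ H (List.take (j + 1 - (1 + q.length + 1)) t) := hpre' _
      have h4 : H (List.take (j+1) [((1:ℤ),(1:ℤ))]) = 1 := by
        rw [List.take_of_length_le (by simp)]; simp [H]
      simp only [List.length_append, List.length_cons, List.length_singleton,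
        List.length_nil, Nat.zero_add, Nat.succ_sub_one]
      rw [h4]
      omega

theorem decomp {n : ℕ} (hn : 1 ≤ n) {p : List (ℤ × ℤ)} (hp : IsPath S5 n p) :
    (∃ (r : ℕ) (t : List (ℤ × ℤ)), 1 ≤ r ∧ r ≤ n ∧ IsPath S5 (n - r) t ∧
        p = ((2 * r : ℤ), 0) :: t) ∨
    (∃ (k : ℕ) (q t : List (ℤ × ℤ)), k + 1 ≤ n ∧ IsPath S5 k q ∧ IsPath S5 (n - 1 - k) t ∧
        p = (1, 1) :: (q ++ (1, -1) :: t)) := by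
  rw [isPath_iff] at hp
  obtain ⟨hS, hW, hH, hpre⟩ := hp
  cases p with
  | nil => simp [W] at hW; omega
  | cons a t =>
  have haS : a ∈ S5 := hS a (by simp)
  have htS : ∀ s ∈ t, s ∈ S5 := fun s hs => hS s (by simp [hs])
  simp only [W_cons, H_cons] at hW hH
  rcases snd_cases haS with h2 | h2 | h2
  · -- up step
    have ha : a = (1, 1) := by
      rcases haS with h | h | ⟨r, hr, h⟩ <;> subst h <;> simp_all
    subst ha
    norm_num at hW hH
    -- find first return
    have hex : ∃ i, H (t.take i) = -1 :=
      ⟨t.length, by rw [List.take_of_length_le le_rfl]; omega⟩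
    classical
    set i := Nat.find hex with hi
    have hieq : H (t.take i) = -1 := Nat.find_spec hex
    have hmin : ∀ j < i, H (t.take j) ≠ -1 := fun j hj => Nat.find_min hex hj
    have hlow : ∀ j, -1 ≤ H (t.take j) := fun j => by
      have := hpre (j + 1)
      simp only [List.take_succ_cons, H_cons] at this
      omega
    have hnn : ∀ j < i, 0 ≤ H (t.take j) := fun j hj => by
      have := hmin j hj; have := hlow j; omega
    have hipos : 1 ≤ i := by
      by_contra h
      have : i = 0 := by omega
      rw [this] at hieq; simp at hieq
    have hile : i ≤ t.length := by
      by_contra h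
      have := Nat.find_min hex (m := t.length) (by omega)
      simp [List.take_of_length_le] at this
      omega
    clear_value i
    obtain ⟨j, rfl⟩ : ∃ j, i = j + 1 := ⟨i - 1, by omega⟩
    have hjlt : j < t.length := by omega
    have htake : t.take (j+1) = t.take j ++ [t[j]] := by
      rw [List.take_succ]; simp [List.getElem?_eq_getElem hjlt]
    have hdS : t[j] ∈ S5 := htS _ (by simp [List.getElem_mem])
    have hHq : 0 ≤ H (t.take j) := hnn j (by omega)
    have hstep : H (t.take j) + (t[j]).2 = -1 := by
      rw [htake, H_append, H_singleton] at hieq; omega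
    have hd2 : (t[j]).2 = -1 := by
      rcases snd_cases hdS with h | h | h <;> omega
    have hd : t[j] = (1, -1) := snd_neg hdS hd2
    have hHq0 : H (t.take j) = 0 := by omega
    -- q := t.take j, rest := t.drop (j+1)
    set q := t.take j with hqdef
    set rest := t.drop (j+1) with hrestdef
    have hsplit : t = q ++ (1, -1) :: rest := by
      conv_lhs => rw [← List.take_append_drop (j+1) t]
      rw [htake, hd]; simp [hrestdef]
    have hqS : ∀ s ∈ q, s ∈ S5 := fun s hs => htS s (List.mem_of_mem_take hs)
    have hrS : ∀ s ∈ rest, s ∈ S5 := fun s hs => htS s (List.mem_of_mem_drop hs)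
    have hqpre : ∀ l, 0 ≤ H (q.take l) := by
      intro l
      rcases le_or_gt j l with h | h
      · rw [List.take_of_length_le (by simp [hqdef]; omega)]; exact hHq0.ge
      · have : q.take l = t.take l := by
          rw [hqdef, List.take_take]; congr 1; omega
        rw [this]; exact hnn l (by omega)
    have hrpre : ∀ l, 0 ≤ H (rest.take l) := by
      intro l
      have : t.take (j + 1 + l) = t.take (j+1) ++ rest.take l := List.take_add (l := t) (i := j+1) (j := l)
      have hh : H (t.take (j+1+l)) = -1 + H (rest.take l) := by
        rw [this]; simp [hieq]
      have := hlow (j+1+l)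
      have h5 : H (t.take (j+1+l)) ≠ -1 ∨ H (rest.take l) = 0 := by
        rcases eq_or_ne (H (rest.take l)) 0 with h | h
        · right; exact h
        · left; omega
      have hp := hpre (j + 1 + l + 1)
      simp only [List.take_succ_cons, H_cons] at hp
      omega
    -- widths
    have hWq0 : 0 ≤ W q := W_nonneg hqS
    have hWr0 : 0 ≤ W rest := W_nonneg hrS
    have hWsplit : W t = W q + 1 + W rest := by rw [hsplit]; simp; ring
    have hpar : (2:ℤ) ∣ (W q - H q) := parity hqS
    have hHqq : H q = 0 := hHq0
    rw [hHqq, sub_zero] at hpar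
    obtain ⟨kz, hkz⟩ : ∃ kz : ℤ, W q = 2 * kz := ⟨W q / 2, by omega⟩
    have hkznn : 0 ≤ kz := by omega
    obtain ⟨k, rfl⟩ := Int.eq_ofNat_of_zero_le hkznn
    have hWrest : W rest = 2 * ((n : ℤ) - 1 - k) := by omega
    have hkn : k + 1 ≤ n := by
      have h7 : (k:ℤ) + 1 ≤ (n:ℤ) := by omega
      exact_mod_cast h7
    right
    refine ⟨k, q, rest, hkn, ?_, ?_, by rw [hsplit]⟩
    · rw [isPath_iff]; exact ⟨hqS, hkz, hHqq, hqpre⟩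
    · rw [isPath_iff]
      refine ⟨hrS, ?_, ?_, hrpre⟩
      · omega
      · have h8 : H t = H q + (-1) + H rest := by rw [hsplit]; simp; ring
        omega
  · -- down step: contradiction
    have := hpre 1
    simp [H] at this
    omega
  · -- flat step
    obtain ⟨r, hr, ha⟩ : ∃ r : ℤ, 0 < r ∧ a = (2 * r, 0) := by
      rcases haS with h | h | h
      · subst h; simp at h2
      · subst h; simp at h2
      · exact h
    subst ha
    norm_num at hW hH
    have htpre : ∀ i, 0 ≤ H (t.take i) := fun i => by
      have := hpre (i + 1)
      simpa only [List.take_succ_cons, H_cons, zero_add] using this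
    obtain ⟨rn, rfl⟩ := Int.eq_ofNat_of_zero_le hr.le
    have hrn : 1 ≤ rn := by exact_mod_cast hr
    have hWt0 : 0 ≤ W t := W_nonneg htS
    have hrle : rn ≤ n := by
      exact_mod_cast (by omega : (rn:ℤ) ≤ n)
    left
    refine ⟨rn, t, hrn, hrle, ?_, rfl⟩
    rw [isPath_iff]
    exact ⟨htS, by omega, by omega, htpre⟩

lemma no_lt {k : ℕ} {q q' t t' : List (ℤ × ℤ)} (hq : IsPath S5 k q)
    (hq' : ∀ l, 0 ≤ H (q'.take l)) (hH' : True)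
    (h : q ++ (1, -1) :: t = q' ++ (1, -1) :: t') (hlt : q.length < q'.length) : False := by
  rw [isPath_iff] at hq
  obtain ⟨-, -, hHq, -⟩ := hq
  have h1 : (q' ++ (1, -1) :: t').take (q.length + 1) = q'.take (q.length + 1) := by
    rw [List.take_append]
    rw [show q.length + 1 - q'.length = 0 from by omega]
    simp
  have h2 : (q ++ (1, -1) :: t).take (q.length + 1) = q ++ [((1:ℤ), (-1:ℤ))] := by
    rw [List.take_append]
    rw [List.take_of_length_le (by omega), show q.length + 1 - q.length = 1 from by omega]
    simp
  have h3 : q'.take (q.length + 1) = q ++ [((1:ℤ), (-1:ℤ))] := by rw [← h1, ← h, h2]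
  have := hq' (q.length + 1)
  rw [h3] at this
  simp only [H_append, H_singleton] at this
  rw [hHq] at this
  norm_num at this

lemma split_eq {k k' : ℕ} {q q' t t' : List (ℤ × ℤ)} (hq : IsPath S5 k q) (hq' : IsPath S5 k' q')
    (h : q ++ (1, -1) :: t = q' ++ (1, -1) :: t') : q = q' ∧ t = t' := by
  have hlen : q.length = q'.length := by
    by_contra hne
    rcases Nat.lt_or_ge q.length q'.length with hlt | hge
    · exact no_lt hq (fun l => ((isPath_iff.mp hq').2.2.2) l) trivial h hlt
    · exact no_lt hq' (fun l => ((isPath_iff.mp hq).2.2.2) l) trivial h.symm (by omega)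
  obtain ⟨h1, h2⟩ := List.append_inj h hlen
  exact ⟨h1, by injection h2⟩

abbrev Pt (n : ℕ) : Type := {p : List (ℤ × ℤ) // IsPath S5 n p}

def Dom (n : ℕ) : Type :=
  (Σ _r : Fin n, Pt (n - 1 - _r)) ⊕ (Σ _k : Fin n, Pt (_k : ℕ) × Pt (n - 1 - _k))

def glue {n : ℕ} (hn : 1 ≤ n) : Dom n → Pt n
  | Sum.inl ⟨r, t⟩ => ⟨((2 * (((r : ℕ) + 1 : ℕ) : ℤ)), 0) :: t.1, by
      have hr := r.isLt
      have h := isPath_flat (r := (r : ℕ) + 1) (by omega) t.2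
      rwa [show ((r : ℕ) + 1) + (n - 1 - (r : ℕ)) = n from by omega] at h⟩
  | Sum.inr ⟨k, q, t⟩ => ⟨(1, 1) :: (q.1 ++ (1, -1) :: t.1), by
      have hk := k.isLt
      have h := isPath_up q.2 t.2
      rwa [show (k : ℕ) + (n - 1 - (k : ℕ)) + 1 = n from by omega] at h⟩

@[simp] lemma glue_inl_val {n : ℕ} (hn : 1 ≤ n) (r : Fin n) (t : Pt (n - 1 - r)) :
    (glue hn (Sum.inl ⟨r, t⟩)).1 = ((2 * (((r : ℕ) + 1 : ℕ) : ℤ)), 0) :: t.1 := rfl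

@[simp] lemma glue_inr_val {n : ℕ} (hn : 1 ≤ n) (k : Fin n) (q : Pt (k : ℕ))
    (t : Pt (n - 1 - k)) :
    (glue hn (Sum.inr ⟨k, q, t⟩)).1 = (1, 1) :: (q.1 ++ (1, -1) :: t.1) := rfl

theorem glue_bij {n : ℕ} (hn : 1 ≤ n) : Function.Bijective (glue hn) := by
  constructor
  · rintro (⟨r, t⟩ | ⟨k, q, t⟩) (⟨r', t'⟩ | ⟨k', q', t'⟩) h
    · have hv := congrArg Subtype.val h
      simp only [glue_inl_val, List.cons.injEq, Prod.mk.injEq] at hv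
      obtain ⟨⟨h1, -⟩, h2⟩ := hv
      have hr : r = r' := by
        apply Fin.ext
        omega
      subst hr
      rw [Subtype.ext h2]
    · have hv := congrArg Subtype.val h
      simp only [glue_inl_val, glue_inr_val, List.cons.injEq, Prod.mk.injEq] at hv
      exact absurd hv.1.2 (by norm_num)
    · have hv := congrArg Subtype.val h
      simp only [glue_inl_val, glue_inr_val, List.cons.injEq, Prod.mk.injEq] at hv
      exact absurd hv.1.2 (by norm_num)
    · have hv := congrArg Subtype.val h
      simp only [glue_inr_val, List.cons.injEq] at hv
      obtain ⟨hq, ht⟩ := split_eq q.2 q'.2 hv.2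
      have hk : k = k' := by
        apply Fin.ext
        have w1 := (isPath_iff.mp q.2).2.1
        have w2 := (isPath_iff.mp q'.2).2.1
        rw [hq] at w1
        omega
      subst hk
      rw [show q = q' from Subtype.ext hq, show t = t' from Subtype.ext ht]
  · rintro ⟨p, hp⟩
    rcases decomp hn hp with ⟨r, t, hr1, hrn, ht, rfl⟩ | ⟨k, q, t, hkn, hq, ht, rfl⟩
    · refine ⟨Sum.inl ⟨⟨r - 1, by omega⟩, ⟨t, ?_⟩⟩, ?_⟩
      · rwa [show n - 1 - (r - 1) = n - r from by omega]
      · apply Subtype.ext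
        rw [glue_inl_val]
        simp only [Fin.val_mk]
        congr 2
        omega
    · exact ⟨Sum.inr ⟨⟨k, by omega⟩, ⟨q, hq⟩, ⟨t, ht⟩⟩, rfl⟩

lemma isPath_nil : IsPath S5 0 [] := by
  refine ⟨by simp, by simp, by simp, ?_⟩
  intro q hq
  rw [List.prefix_nil.mp hq]
  simp

lemma finite_Pt (n : ℕ) : Finite (Pt n) := by
  induction n using Nat.strong_induction_on with
  | _ n ih =>
    rcases Nat.eq_zero_or_pos n with rfl | hn
    · haveI : Subsingleton (Pt 0) :=
        ⟨fun a b => Subtype.ext (by rw [path_zero a.2, path_zero b.2])⟩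
      infer_instance
    · haveI h1 : ∀ r : Fin n, Finite (Pt (n - 1 - (r : ℕ))) := fun r => ih _ (by omega)
      haveI h2 : ∀ k : Fin n, Finite (Pt (k : ℕ)) := fun k => ih _ k.isLt
      haveI : Finite (Dom n) := by unfold Dom; infer_instance
      exact Finite.of_surjective (glue hn) (glue_bij hn).2

lemma card_zero : Nat.card (Pt 0) = 1 := by
  haveI : Subsingleton (Pt 0) :=
    ⟨fun a b => Subtype.ext (by rw [path_zero a.2, path_zero b.2])⟩
  haveI : Nonempty (Pt 0) := ⟨⟨[], isPath_nil⟩⟩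
  exact Nat.card_unique

lemma card_rec (n : ℕ) (hn : 1 ≤ n) :
    Nat.card (Pt n) = (∑ r ∈ Finset.range n, Nat.card (Pt (n - 1 - r))) +
      ∑ k ∈ Finset.range n, Nat.card (Pt k) * Nat.card (Pt (n - 1 - k)) := by
  classical
  haveI : ∀ m, Fintype (Pt m) := fun m => @Fintype.ofFinite _ (finite_Pt m)
  rw [← Nat.card_congr (Equiv.ofBijective _ (glue_bij hn))]
  unfold Dom
  simp only [Nat.card_eq_fintype_card, Fintype.card_sum, Fintype.card_sigma, Fintype.card_prod]
  rw [Fin.sum_univ_eq_sum_range (fun i => Fintype.card (Pt (n - 1 - i))) n,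
    Fin.sum_univ_eq_sum_range (fun i => Fintype.card (Pt i) * Fintype.card (Pt (n - 1 - i))) n]

end GFS5


theorem gf_L_S5 (P s : PowerSeries ℚ)
    (hP : ∀ n : ℕ, PowerSeries.coeff n P =
      if n = 0 then 1
      else (Nat.card {p : List (ℤ × ℤ) // IsPath S5 n p} : ℚ))
    (hs0 : PowerSeries.constantCoeff s = 1)
    (hs2 : s ^ 2 = 1 - 8 * PowerSeries.X + 12 * PowerSeries.X ^ 2 - 4 * PowerSeries.X ^ 3) :
    2 * PowerSeries.X * (PowerSeries.X - 1) * P = 2 * PowerSeries.X - 1 + s := by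
  have hc : ∀ n : ℕ, PowerSeries.coeff n P = (Nat.card (GFS5.Pt n) : ℚ) := by
    intro n
    rw [hP n]
    by_cases h : n = 0
    · subst h; rw [if_pos rfl, GFS5.card_zero]; norm_num
    · rw [if_neg h]
  set G : PowerSeries ℚ := PowerSeries.mk (fun _ => (1 : ℚ)) with hGdef
  have key : P = 1 + PowerSeries.X * (G * P) + PowerSeries.X * P ^ 2 := by
    ext n
    rw [map_add, map_add]
    cases n with
    | zero =>
      rw [hc 0, GFS5.card_zero]
      simp
    | succ m =>
      rw [PowerSeries.coeff_succ_X_mul, PowerSeries.coeff_succ_X_mul, sq,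
        PowerSeries.coeff_mul, PowerSeries.coeff_mul,
        Finset.Nat.sum_antidiagonal_eq_sum_range_succ_mk,
        Finset.Nat.sum_antidiagonal_eq_sum_range_succ_mk]
      simp only [hGdef, PowerSeries.coeff_mk, one_mul, PowerSeries.coeff_one]
      rw [if_neg (Nat.succ_ne_zero m), hc]
      rw [GFS5.card_rec (m + 1) (by omega)]
      push_cast
      rw [zero_add]
      congr 1
      · apply Finset.sum_congr rfl; intro k hk; rw [hc]
      · apply Finset.sum_congr rfl; intro k hk
        rw [hc, hc]
  have hG : (1 - PowerSeries.X) * G = 1 := by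
    ext n
    rw [sub_mul, one_mul, map_sub]
    cases n with
    | zero => simp [hGdef]
    | succ m =>
      rw [PowerSeries.coeff_succ_X_mul]
      simp [hGdef, PowerSeries.coeff_one]
  have h2 : (1 - PowerSeries.X) * P =
      (1 - PowerSeries.X) + PowerSeries.X * P + PowerSeries.X * (1 - PowerSeries.X) * P ^ 2 := by
    linear_combination (1 - PowerSeries.X) * key + PowerSeries.X * P * hG
  have hu : (2 * PowerSeries.X * (1 - PowerSeries.X) * P + (2 * PowerSeries.X - 1)) ^ 2
      = s ^ 2 := by
    linear_combination (-4 * PowerSeries.X * (1 - PowerSeries.X)) * h2 - hs2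
  have hfac : ((2 * PowerSeries.X * (1 - PowerSeries.X) * P + (2 * PowerSeries.X - 1)) - s) *
      ((2 * PowerSeries.X * (1 - PowerSeries.X) * P + (2 * PowerSeries.X - 1)) + s) = 0 := by
    linear_combination hu
  rcases mul_eq_zero.mp hfac with h | h
  · exfalso
    have h' := sub_eq_zero.mp h
    have := congrArg (PowerSeries.constantCoeff) h'
    rw [hs0] at this
    simp at this
    norm_num at this
  · linear_combination -h
end

section
/- Let P_{S6}(x) = 1 + Σ_{n≥1} |L_{S6}(n)| xⁿ be the formal power series in x over ℚ counting the paths in L_{S6}(n). Then 2x(x−2)² · P_{S6}(x) = 1 + 2x − x² − √((1−x)(1−11x+7x²−x³)), where the square root denotes the unique formal power series with constant term 1 whose square is (1−x)(1−11x+7x²−x³). -/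
namespace GF6

/-- vertical displacement -/
def vsum (p : List (ℤ × ℤ)) : ℤ := (p.map Prod.snd).sum
/-- horizontal displacement -/
def wsum (p : List (ℤ × ℤ)) : ℤ := (p.map Prod.fst).sum

@[simp] lemma vsum_nil : vsum [] = 0 := rfl
@[simp] lemma wsum_nil : wsum [] = 0 := rfl
@[simp] lemma vsum_cons (s : ℤ × ℤ) (p) : vsum (s :: p) = s.2 + vsum p := by
  simp [vsum]
@[simp] lemma wsum_cons (s : ℤ × ℤ) (p) : wsum (s :: p) = s.1 + wsum p := by
  simp [wsum]
@[simp] lemma vsum_append (p q : List (ℤ × ℤ)) : vsum (p ++ q) = vsum p + vsum q := by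
  simp [vsum]
@[simp] lemma wsum_append (p q : List (ℤ × ℤ)) : wsum (p ++ q) = wsum p + wsum q := by
  simp [wsum]
@[simp] lemma vsum_singleton (s : ℤ × ℤ) : vsum [s] = s.2 := by simp
@[simp] lemma wsum_singleton (s : ℤ × ℤ) : wsum [s] = s.1 := by simp

/-- all steps belong to S6 -/
def stepsIn (p : List (ℤ × ℤ)) : Prop := ∀ s ∈ p, s ∈ S6

lemma s6_up {s : ℤ × ℤ} (hs : s ∈ S6) (h : 0 < s.2) : s = (s.2, s.2) := by
  rcases hs with ⟨r, hr, h1 | h1⟩ | h1 <;> rw [h1] <;> rw [h1] at h <;> simp_all <;> omega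
lemma s6_down {s : ℤ × ℤ} (hs : s ∈ S6) (h : s.2 < 0) : s = (-s.2, s.2) := by
  rcases hs with ⟨r, hr, h1 | h1⟩ | h1 <;> rw [h1] <;> rw [h1] at h <;> simp_all <;> omega
lemma s6_flat {s : ℤ × ℤ} (hs : s ∈ S6) (h : s.2 = 0) : s = (2, 0) := by
  rcases hs with ⟨r, hr, h1 | h1⟩ | h1 <;> rw [h1] <;> rw [h1] at h <;> simp_all <;> omega
lemma s6_fst_pos {s : ℤ × ℤ} (hs : s ∈ S6) : 0 < s.1 := by
  rcases hs with ⟨r, hr, h1 | h1⟩ | h1 <;> rw [h1] <;> simpa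
lemma s6_parity {s : ℤ × ℤ} (hs : s ∈ S6) : 2 ∣ s.1 - s.2 := by
  rcases hs with ⟨r, hr, h1 | h1⟩ | h1 <;> rw [h1] <;> simp <;> ring_nf <;> omega
lemma s6_snd_le {s : ℤ × ℤ} (hs : s ∈ S6) : -s.1 ≤ s.2 ∧ s.2 ≤ s.1 := by
  rcases hs with ⟨r, hr, h1 | h1⟩ | h1 <;> rw [h1] <;> constructor <;> simp <;> omega
lemma s6_mem_up (r : ℤ) (hr : 0 < r) : ((r, r) : ℤ × ℤ) ∈ S6 := Or.inl ⟨r, hr, Or.inl rfl⟩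
lemma s6_mem_down (r : ℤ) (hr : 0 < r) : ((r, -r) : ℤ × ℤ) ∈ S6 := Or.inl ⟨r, hr, Or.inr rfl⟩
lemma s6_mem_flat : ((2, 0) : ℤ × ℤ) ∈ S6 := Or.inr rfl

lemma length_le_wsum {p : List (ℤ × ℤ)} (h : stepsIn p) : (p.length : ℤ) ≤ wsum p := by
  induction p with
  | nil => simp
  | cons s t ih =>
    have hs := s6_fst_pos (h s (by simp))
    have := ih (fun x hx => h x (by simp [hx]))
    simp only [List.length_cons, wsum_cons]
    push_cast
    omega

lemma wsum_nonneg {p : List (ℤ × ℤ)} (h : stepsIn p) : 0 ≤ wsum p :=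
  le_trans (by positivity) (length_le_wsum h)

lemma eq_nil_of_wsum_eq_zero {p : List (ℤ × ℤ)} (h : stepsIn p) (hw : wsum p = 0) :
    p = [] := by
  have := length_le_wsum h
  rw [hw] at this
  have : p.length = 0 := by omega
  exact List.eq_nil_of_length_eq_zero this

lemma wsum_parity {p : List (ℤ × ℤ)} (h : stepsIn p) : 2 ∣ wsum p - vsum p := by
  induction p with
  | nil => simp
  | cons s t ih =>
    have hs := s6_parity (h s (by simp))
    have := ih (fun x hx => h x (by simp [hx]))
    simp only [wsum_cons, vsum_cons]
    omega

lemma wsum_even {p : List (ℤ × ℤ)} (h : stepsIn p) (hv : vsum p = 0) :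
    ∃ k : ℕ, wsum p = 2 * (k : ℤ) := by
  have h1 := wsum_parity h
  have h2 := wsum_nonneg h
  rw [hv, sub_zero] at h1
  obtain ⟨c, hc⟩ := h1
  refine ⟨c.toNat, ?_⟩
  rw [hc]
  congr 1
  rw [Int.toNat_of_nonneg (by omega)]

end GF6
namespace GF6

/-- nonnegativity of all prefix sums, in `take` form -/
def NN (p : List (ℤ × ℤ)) : Prop := ∀ m : ℕ, 0 ≤ vsum (p.take m)

/-- excursion = path in our vocabulary -/
def Exc (n : ℕ) (p : List (ℤ × ℤ)) : Prop :=
  stepsIn p ∧ wsum p = 2 * n ∧ vsum p = 0 ∧ NN p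

lemma exc_iff_isPath {n : ℕ} {p : List (ℤ × ℤ)} : Exc n p ↔ IsPath S6 n p := by
  constructor
  · rintro ⟨h1, h2, h3, h4⟩
    refine ⟨h1, h2, h3, fun q hq => ?_⟩
    have : q = p.take q.length := List.prefix_iff_eq_take.mp hq
    have h5 := h4 q.length
    rw [← this] at h5
    exact h5
  · rintro ⟨h1, h2, h3, h4⟩
    exact ⟨h1, h2, h3, fun m => h4 _ (List.take_prefix m p)⟩

lemma exc_steps {n p} (h : Exc n p) : stepsIn p := h.1
lemma exc_wsum {n p} (h : Exc n p) : wsum p = 2 * n := h.2.1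
lemma exc_vsum {n p} (h : Exc n p) : vsum p = 0 := h.2.2.1
lemma exc_nn {n p} (h : Exc n p) : NN p := h.2.2.2

lemma exc_nil : Exc 0 [] := ⟨fun s hs => absurd hs List.not_mem_nil, by simp, by simp, fun m => by simp⟩

lemma exc_zero_eq_nil {p} (h : Exc 0 p) : p = [] :=
  eq_nil_of_wsum_eq_zero h.1 (by rw [exc_wsum h]; ring)

lemma exc_ne_nil {n p} (h : Exc n p) (hn : 0 < n) : p ≠ [] := by
  intro he
  have := exc_wsum h
  rw [he] at this
  simp at this
  omega

lemma exc_nonempty_pos {n p} (h : Exc n p) (hp : p ≠ []) : 0 < n := by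
  rcases Nat.eq_zero_or_pos n with h0 | h0
  · exact absurd (exc_zero_eq_nil (h0 ▸ h)) hp
  · exact h0

/-- uniqueness of length-2k: helper -/
lemma exc_unique_n {n m p} (h1 : Exc n p) (h2 : Exc m p) : n = m := by
  have := exc_wsum h1
  rw [exc_wsum h2] at this
  omega

section Finite

lemma finite_lists {α : Type*} {s : Set α} (hs : s.Finite) (n : ℕ) :
    {l : List α | l.length ≤ n ∧ ∀ x ∈ l, x ∈ s}.Finite := by
  induction n with
  | zero =>
    apply Set.Finite.subset (Set.finite_singleton ([] : List α))
    rintro l ⟨hl, -⟩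
    simp_all [List.eq_nil_of_length_eq_zero (Nat.le_zero.mp hl)]
  | succ n ih =>
    apply Set.Finite.subset ((Set.finite_singleton ([] : List α)).union
      (Set.Finite.image2 List.cons hs ih))
    rintro l ⟨hl, hmem⟩
    rcases l with _ | ⟨a, t⟩
    · exact Or.inl rfl
    · refine Or.inr (Set.mem_image2_of_mem (hmem a (by simp)) ?_)
      refine ⟨by simpa using hl, fun x hx => hmem x (by simp [hx])⟩

lemma mem_wsum_le {p : List (ℤ × ℤ)} (h : stepsIn p) {s : ℤ × ℤ} (hs : s ∈ p) :
    s.1 ≤ wsum p := by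
  induction p with
  | nil => simp at hs
  | cons a t ih =>
    have ha := s6_fst_pos (h a (by simp))
    have ht : stepsIn t := fun x hx => h x (by simp [hx])
    rcases List.mem_cons.mp hs with rfl | hs'
    · have := wsum_nonneg ht
      simp only [wsum_cons]; omega
    · have := ih ht hs'
      simp only [wsum_cons]; omega

lemma finite_exc (n : ℕ) : {p : List (ℤ × ℤ) | Exc n p}.Finite := by
  apply Set.Finite.subset (finite_lists (Set.finite_Icc ((1 : ℤ), (-(2 * n) : ℤ)) ((2 * n : ℤ), (2 * n : ℤ))) (2 * n))
  rintro p hp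
  have hst := exc_steps hp
  constructor
  · have := length_le_wsum hst
    rw [exc_wsum hp] at this
    exact_mod_cast by push_cast at this ⊢; omega
  · intro x hx
    have h1 := s6_fst_pos (hst x hx)
    have h2 := s6_snd_le (hst x hx)
    have h3 := mem_wsum_le hst hx
    rw [exc_wsum hp] at h3
    constructor
    · constructor <;> simp <;> omega
    · constructor <;> simp <;> omega

lemma finite_exc_sub (n : ℕ) (Q : List (ℤ × ℤ) → Prop) :
    Finite {p : List (ℤ × ℤ) // Exc n p ∧ Q p} := by
  have : {p : List (ℤ × ℤ) | Exc n p ∧ Q p}.Finite :=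
    (finite_exc n).subset (fun p hp => hp.1)
  exact this.to_subtype

lemma finite_exc_sub' (n : ℕ) : Finite {p : List (ℤ × ℤ) // Exc n p} := by
  exact (finite_exc n).to_subtype

end Finite

end GF6
namespace GF6

open scoped Classical

/-- arch: an excursion touching the axis only at its two endpoints -/
def IsArch (k : ℕ) (q : List (ℤ × ℤ)) : Prop :=
  Exc k q ∧ q ≠ [] ∧ ∀ m : ℕ, 0 < m → m < q.length → 0 < vsum (q.take m)

lemma arch_exc {k q} (h : IsArch k q) : Exc k q := h.1
lemma arch_ne_nil {k q} (h : IsArch k q) : q ≠ [] := h.2.1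
lemma arch_pos {k q} (h : IsArch k q) : ∀ m : ℕ, 0 < m → m < q.length → 0 < vsum (q.take m) := h.2.2
lemma arch_k_pos {k q} (h : IsArch k q) : 0 < k := exc_nonempty_pos h.1 h.2.1

/-- first return time to the axis -/
noncomputable def fret (p : List (ℤ × ℤ)) : ℕ :=
  if h : ∃ m, 0 < m ∧ m ≤ p.length ∧ vsum (p.take m) = 0 then Nat.find h else 0

lemma fret_exists {n : ℕ} {p : List (ℤ × ℤ)} (h : Exc n p) (hp : p ≠ []) :
    ∃ m, 0 < m ∧ m ≤ p.length ∧ vsum (p.take m) = 0 :=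
  ⟨p.length, List.length_pos_iff.mpr hp, le_refl _, by rw [List.take_length]; exact exc_vsum h⟩

lemma fret_spec {n : ℕ} {p : List (ℤ × ℤ)} (h : Exc n p) (hp : p ≠ []) :
    0 < fret p ∧ fret p ≤ p.length ∧ vsum (p.take (fret p)) = 0 := by
  rw [fret, dif_pos (fret_exists h hp)]
  exact Nat.find_spec (fret_exists h hp)

lemma fret_min {n : ℕ} {p : List (ℤ × ℤ)} (h : Exc n p) (hp : p ≠ []) {m : ℕ}
    (h1 : 0 < m) (h2 : m < fret p) : 0 < vsum (p.take m) := by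
  have hex := fret_exists h hp
  rw [fret, dif_pos hex] at h2
  have h3 := Nat.find_min hex h2
  push_neg at h3
  have hle : m ≤ p.length := by
    have h4 := (Nat.find_spec hex).2.1
    omega
  have := h3 h1 hle
  have h5 := exc_nn h m
  omega

noncomputable def archOf (p : List (ℤ × ℤ)) : List (ℤ × ℤ) := p.take (fret p)
noncomputable def restOf (p : List (ℤ × ℤ)) : List (ℤ × ℤ) := p.drop (fret p)
noncomputable def aSz (p : List (ℤ × ℤ)) : ℕ := (wsum (archOf p)).toNat / 2

lemma arch_rest_append (p : List (ℤ × ℤ)) : archOf p ++ restOf p = p :=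
  List.take_append_drop _ _

lemma aSz_spec {p : List (ℤ × ℤ)} (hst : stepsIn (archOf p)) (hv : vsum (archOf p) = 0) :
    wsum (archOf p) = 2 * (aSz p : ℤ) := by
  obtain ⟨k, hk⟩ := wsum_even hst hv
  rw [aSz, hk]
  push_cast
  omega

/-- main splitting lemma -/
lemma split_spec {n : ℕ} {p : List (ℤ × ℤ)} (h : Exc n p) (hp : p ≠ []) :
    IsArch (aSz p) (archOf p) ∧ Exc (n - aSz p) (restOf p) ∧ 0 < aSz p ∧ aSz p ≤ n := by
  obtain ⟨hf1, hf2, hf3⟩ := fret_spec h hp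
  have hvA : vsum (archOf p) = 0 := hf3
  have hstA : stepsIn (archOf p) := fun s hs => exc_steps h s (List.take_subset _ _ hs)
  have hstR : stepsIn (restOf p) := fun s hs => exc_steps h s (List.drop_subset _ _ hs)
  have hlenA : (archOf p).length = fret p := by
    rw [archOf, List.length_take]
    omega
  have hwA : wsum (archOf p) = 2 * (aSz p : ℤ) := aSz_spec hstA hvA
  have hwsplit : wsum (archOf p) + wsum (restOf p) = 2 * n := by
    rw [← wsum_append, arch_rest_append]; exact exc_wsum h
  have hvsplit : vsum (archOf p) + vsum (restOf p) = 0 := by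
    rw [← vsum_append, arch_rest_append]; exact exc_vsum h
  have hwRnn : 0 ≤ wsum (restOf p) := wsum_nonneg hstR
  have hle : aSz p ≤ n := by omega
  have hvR : vsum (restOf p) = 0 := by omega
  have hNNA : NN (archOf p) := by
    intro m
    rw [archOf, List.take_take]
    exact exc_nn h _
  have hposA : 0 < aSz p := by
    by_contra h0
    have h1 : aSz p = 0 := by omega
    rw [h1] at hwA
    have : archOf p = [] := eq_nil_of_wsum_eq_zero hstA (by omega)
    rw [this] at hlenA
    simp at hlenA
    omega
  refine ⟨⟨⟨hstA, hwA, hvA, hNNA⟩, ?_, ?_⟩, ⟨hstR, ?_, hvR, ?_⟩, hposA, hle⟩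
  · rw [← List.length_pos_iff, hlenA]; exact hf1
  · intro m hm1 hm2
    rw [hlenA] at hm2
    rw [archOf, List.take_take, min_eq_left (le_of_lt hm2)]
    exact fret_min h hp hm1 hm2
  · push_cast
    omega
  · intro m
    have h1 : p.take (fret p + m) = archOf p ++ (restOf p).take m := List.take_add
    have h2 := exc_nn h (fret p + m)
    rw [h1, vsum_append, hvA] at h2
    omega

/-- joining an arch and an excursion -/
lemma join_exc {k m : ℕ} {q r : List (ℤ × ℤ)} (hq : IsArch k q) (hr : Exc m r) :
    Exc (k + m) (q ++ r) := by
  obtain ⟨⟨hs1, hw1, hv1, hn1⟩, hne, hpos⟩ := hq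
  obtain ⟨hs2, hw2, hv2, hn2⟩ := hr
  refine ⟨?_, ?_, ?_, ?_⟩
  · intro s hs
    rcases List.mem_append.mp hs with h | h
    exacts [hs1 s h, hs2 s h]
  · rw [wsum_append, hw1, hw2]; push_cast; ring
  · rw [vsum_append, hv1, hv2]; ring
  · intro t
    rw [List.take_append, vsum_append]
    have := hn1 t
    have := hn2 (t - q.length)
    omega

lemma fret_join {k m : ℕ} {q r : List (ℤ × ℤ)} (hq : IsArch k q) (hr : Exc m r) :
    fret (q ++ r) = q.length := by
  have hj : Exc (k + m) (q ++ r) := join_exc hq hr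
  have hne : (q ++ r) ≠ [] := by
    simp only [ne_eq, List.append_eq_nil_iff]
    rintro ⟨h1, -⟩
    exact arch_ne_nil hq h1
  have hex := fret_exists hj hne
  rw [fret, dif_pos hex]
  rw [Nat.find_eq_iff]
  refine ⟨⟨List.length_pos_iff.mpr (arch_ne_nil hq), ?_, ?_⟩, ?_⟩
  · rw [List.length_append]; omega
  · have h1 : (q ++ r).take q.length = q := List.take_left
    rw [h1]
    exact exc_vsum (arch_exc hq)
  · rintro t ht ⟨ht1, ht2, ht3⟩
    have htake : (q ++ r).take t = q.take t := by
      rw [List.take_append]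
      have h0 : t - q.length = 0 := by omega
      rw [h0]
      simp
    rw [htake] at ht3
    have := arch_pos hq t ht1 ht
    omega

lemma archOf_join {k m : ℕ} {q r : List (ℤ × ℤ)} (hq : IsArch k q) (hr : Exc m r) :
    archOf (q ++ r) = q := by
  rw [archOf, fret_join hq hr, List.take_left]

lemma restOf_join {k m : ℕ} {q r : List (ℤ × ℤ)} (hq : IsArch k q) (hr : Exc m r) :
    restOf (q ++ r) = r := by
  rw [restOf, fret_join hq hr, List.drop_left]

lemma aSz_join {k m : ℕ} {q r : List (ℤ × ℤ)} (hq : IsArch k q) (hr : Exc m r) :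
    aSz (q ++ r) = k := by
  have h1 : archOf (q ++ r) = q := archOf_join hq hr
  have h2 : wsum q = 2 * (k : ℤ) := exc_wsum (arch_exc hq)
  rw [aSz, h1, h2]
  omega

lemma aSz_eq_iff_arch {n : ℕ} {p : List (ℤ × ℤ)} (h : Exc n p) (hp : p ≠ []) :
    aSz p = n ↔ IsArch n p := by
  constructor
  · intro he
    obtain ⟨hA, hR, hpos, hle⟩ := split_spec h hp
    have hwR : wsum (restOf p) = 0 := by
      have h1 := exc_wsum (arch_exc hA)
      have h2 : wsum (archOf p) + wsum (restOf p) = 2 * n := by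
        rw [← wsum_append, arch_rest_append]; exact exc_wsum h
      rw [he] at h1
      omega
    have hRnil : restOf p = [] := eq_nil_of_wsum_eq_zero (exc_steps hR) hwR
    have harch : archOf p = p := by
      conv_rhs => rw [← arch_rest_append p]
      rw [hRnil, List.append_nil]
    rw [← harch, ← he]
    exact hA
  · intro hA
    have := aSz_join hA exc_nil
    rwa [List.append_nil] at this

end GF6
namespace GF6

/-- starts with an up step -/
def SU (p : List (ℤ × ℤ)) : Prop := ∃ s, p.head? = some s ∧ 0 < s.2
/-- ends with a down step -/
def ED (p : List (ℤ × ℤ)) : Prop := ∃ s, p.getLast? = some s ∧ s.2 < 0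

lemma su_ne_nil {p} (h : SU p) : p ≠ [] := by
  rintro rfl
  obtain ⟨s, hs, -⟩ := h
  simp at hs

lemma ed_ne_nil {p} (h : ED p) : p ≠ [] := by
  rintro rfl
  obtain ⟨s, hs, -⟩ := h
  simp at hs

lemma su_append {q r : List (ℤ × ℤ)} (hq : q ≠ []) : SU (q ++ r) ↔ SU q := by
  unfold SU
  rw [List.head?_append_of_ne_nil _ hq]

lemma ed_append {q r : List (ℤ × ℤ)} (hr : r ≠ []) : ED (q ++ r) ↔ ED r := by
  unfold ED
  rw [List.getLast?_append]
  obtain ⟨s, t, rfl⟩ := List.exists_cons_of_ne_nil hr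
  cases h : (s :: t).getLast? with
  | none => simp at h
  | some a => simp

lemma su_cons {s : ℤ × ℤ} {t : List (ℤ × ℤ)} : SU (s :: t) ↔ 0 < s.2 := by
  simp [SU]

lemma ed_concat {s : ℤ × ℤ} {t : List (ℤ × ℤ)} : ED (t ++ [s]) ↔ s.2 < 0 := by
  simp [ED, List.getLast?_concat]

/-- an excursion cannot start with a down step -/
lemma exc_head_nonneg {n : ℕ} {s : ℤ × ℤ} {t : List (ℤ × ℤ)} (h : Exc n (s :: t)) :
    0 ≤ s.2 := by
  have := exc_nn h 1
  simpa using this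

/-- an excursion cannot end with an up step -/
lemma exc_last_nonpos {n : ℕ} {s : ℤ × ℤ} {t : List (ℤ × ℤ)} (h : Exc n (t ++ [s])) :
    s.2 ≤ 0 := by
  have h1 := exc_nn h t.length
  have h2 : (t ++ [s]).take t.length = t := by
    rw [List.take_append]
    simp
  rw [h2] at h1
  have h3 := exc_vsum h
  rw [vsum_append] at h3
  simp at h3
  omega

/-- classification: an arch that does not start with an up step is `[(2,0)]`. -/
lemma arch_not_su {k : ℕ} {q : List (ℤ × ℤ)} (h : IsArch k q) (hsu : ¬ SU q) :
    q = [(2, 0)] ∧ k = 1 := by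
  obtain ⟨s, t, rfl⟩ := List.exists_cons_of_ne_nil (arch_ne_nil h)
  have h0 : 0 ≤ s.2 := exc_head_nonneg (arch_exc h)
  have h1 : s.2 = 0 := by
    rcases lt_or_eq_of_le h0 with h2 | h2
    · exact absurd (su_cons.mpr h2) hsu
    · omega
  have hs : s = (2, 0) := s6_flat (exc_steps (arch_exc h) s (by simp)) h1
  have ht : t = [] := by
    by_contra hne
    have hlen : 1 < (s :: t).length := by
      simp only [List.length_cons]
      have := List.length_pos_iff.mpr hne
      omega
    have := arch_pos h 1 (by norm_num) hlen
    simp [List.take_succ_cons, h1] at this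
  subst ht hs
  refine ⟨rfl, ?_⟩
  have := exc_wsum (arch_exc h)
  simp at this
  omega

lemma arch_flat_isArch : IsArch 1 [((2 : ℤ), (0 : ℤ))] := by
  refine ⟨⟨?_, by simp, by simp, ?_⟩, by simp, ?_⟩
  · intro s hs
    simp at hs
    subst hs
    exact s6_mem_flat
  · intro m
    rcases m with _ | m <;> simp [List.take_succ_cons]
  · intro m h1 h2
    simp at h2
    omega

/-- an arch starting with an up step ends with a down step -/
lemma arch_su_ed {k : ℕ} {q : List (ℤ × ℤ)} (h : IsArch k q) (hsu : SU q) : ED q := by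
  have hne := arch_ne_nil h
  have hq : q.dropLast ++ [q.getLast hne] = q := List.dropLast_append_getLast hne
  set s := q.getLast hne with hs
  have hle : s.2 ≤ 0 := exc_last_nonpos (n := k) (by rw [hq]; exact arch_exc h)
  rcases lt_or_eq_of_le hle with hlt | heq
  · exact ⟨s, by rw [← hq, List.getLast?_concat], hlt⟩
  · exfalso
    -- s is flat; then q.dropLast has vsum 0
    have hsflat : s = (2, 0) := s6_flat (exc_steps (arch_exc h) s (by rw [← hq]; simp)) heq
    have hdrop : q.dropLast = [] := by
      by_contra hne2
      have hlen : q.dropLast.length < q.length := by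
        rw [← hq, List.length_append]
        simp
      have hpos := arch_pos h q.dropLast.length (List.length_pos_iff.mpr hne2) hlen
      have htake : q.take q.dropLast.length = q.dropLast := by
        conv_lhs => rw [← hq]
        rw [List.take_append]
        simp
      rw [htake] at hpos
      have hv := exc_vsum (arch_exc h)
      rw [← hq, vsum_append] at hv
      simp [heq] at hv
      omega
    rw [hdrop] at hq
    simp at hq
    rw [← hq] at hsu
    have := su_cons.mp hsu
    rw [heq] at this
    exact lt_irrefl _ this

lemma arch_ed_su {k : ℕ} {q : List (ℤ × ℤ)} (h : IsArch k q) (hed : ED q) : SU q := by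
  by_contra hsu
  obtain ⟨hq, -⟩ := arch_not_su h hsu
  obtain ⟨s, hs1, hs2⟩ := hed
  rw [hq] at hs1
  simp at hs1
  have hs : s = (2, 0) := by simpa [eq_comm] using hs1
  rw [hs] at hs2
  norm_num at hs2

section CardLemmas

lemma finite_subtype_and {α : Type*} (P Q : α → Prop) [hf : Finite {x // P x}] :
    Finite {x // P x ∧ Q x} := by
  haveI : Finite ↥{x | P x} := hf
  have h : {x | P x}.Finite := Set.toFinite _
  exact (h.subset (fun x hx => hx.1)).to_subtype

open Classical in
/-- generic binary split of a count -/
lemma card_split {α : Type*} (P Q : α → Prop) [hf : Finite {x // P x}] :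
    Nat.card {x // P x} = Nat.card {x // P x ∧ Q x} + Nat.card {x // P x ∧ ¬ Q x} := by
  have f1 : Finite {x // P x ∧ Q x} := finite_subtype_and P Q
  have f2 : Finite {x // P x ∧ ¬ Q x} := finite_subtype_and P (fun x => ¬ Q x)
  rw [← Nat.card_sum]
  apply Nat.card_congr
  refine ⟨fun x => if h : Q x.1 then Sum.inl ⟨x.1, x.2, h⟩ else Sum.inr ⟨x.1, x.2, h⟩,
    fun y => Sum.rec (fun a => ⟨a.1, a.2.1⟩) (fun a => ⟨a.1, a.2.1⟩) y, ?_, ?_⟩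
  · intro x
    by_cases h : Q x.1 <;> simp [h]
  · rintro (⟨a, ha, hq⟩ | ⟨a, ha, hq⟩) <;> simp [hq]

/-- partition of a count according to the values of a bounded `ℕ`-valued function -/
lemma card_range_partition {α : Type*} (P : α → Prop) (f : α → ℕ) (n : ℕ)
    [hfin : Finite {x // P x}] (hb : ∀ x, P x → f x < n) :
    Nat.card {x // P x} = ∑ k ∈ Finset.range n, Nat.card {x // P x ∧ f x = k} := by
  induction n generalizing P with
  | zero =>
    have : IsEmpty {x // P x} := ⟨fun x => Nat.not_lt_zero _ (hb x.1 x.2)⟩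
    simp [Nat.card_of_isEmpty]
  | succ n ih =>
    rw [Finset.sum_range_succ]
    rw [card_split P (fun x => f x = n)]
    have f2 : Finite {x // P x ∧ ¬ f x = n} := finite_subtype_and P (fun x => ¬ f x = n)
    have hrec := ih (fun x => P x ∧ ¬ f x = n) (fun x hx => by
      have := hb x hx.1
      omega)
    rw [hrec, add_comm]
    congr 1
    apply Finset.sum_congr rfl
    intro k hk
    have hk' : k < n := Finset.mem_range.mp hk
    apply Nat.card_congr
    apply Equiv.subtypeEquivRight
    intro x
    constructor
    · rintro ⟨⟨h1, h2⟩, h3⟩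
      exact ⟨h1, h3⟩
    · rintro ⟨h1, h2⟩
      exact ⟨⟨h1, by omega⟩, h2⟩

end CardLemmas

end GF6
namespace GF6

section Master

variable {S L : List (ℤ × ℤ) → Prop}

/-- the splitting equivalence at first return, for arch size `k < n` -/
noncomputable def splitEquiv (n k : ℕ) (hk : k < n)
    (hS : ∀ q r : List (ℤ × ℤ), q ≠ [] → (S (q ++ r) ↔ S q))
    (hL : ∀ q r : List (ℤ × ℤ), r ≠ [] → (L (q ++ r) ↔ L r)) :
    {p : List (ℤ × ℤ) // (Exc n p ∧ p ≠ [] ∧ S p ∧ L p) ∧ aSz p = k} ≃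
      {q : List (ℤ × ℤ) // IsArch k q ∧ S q} ×
        {r : List (ℤ × ℤ) // Exc (n - k) r ∧ r ≠ [] ∧ L r} where
  toFun := fun x =>
    (⟨archOf x.1, by
      obtain ⟨⟨hE, hne, hSp, hLp⟩, hsz⟩ := x.2
      obtain ⟨hA, hR, -, -⟩ := split_spec hE hne
      rw [hsz] at hA
      refine ⟨hA, ?_⟩
      have hAne := arch_ne_nil hA
      rw [← arch_rest_append x.1] at hSp
      exact (hS _ _ hAne).mp hSp⟩,
     ⟨restOf x.1, by
      obtain ⟨⟨hE, hne, hSp, hLp⟩, hsz⟩ := x.2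
      obtain ⟨hA, hR, -, -⟩ := split_spec hE hne
      rw [hsz] at hR
      have hrne : restOf x.1 ≠ [] := exc_ne_nil hR (by omega)
      refine ⟨hR, hrne, ?_⟩
      rw [← arch_rest_append x.1] at hLp
      exact (hL _ _ hrne).mp hLp⟩)
  invFun := fun y => ⟨y.1.1 ++ y.2.1, by
    obtain ⟨⟨q, hq, hSq⟩, ⟨r, hr, hrne, hLr⟩⟩ := y
    simp only
    have hj := join_exc hq hr
    have hkn : k + (n - k) = n := by omega
    rw [hkn] at hj
    refine ⟨⟨hj, ?_, ?_, ?_⟩, ?_⟩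
    · simp only [ne_eq, List.append_eq_nil_iff]
      rintro ⟨h1, -⟩
      exact arch_ne_nil hq h1
    · exact (hS q r (arch_ne_nil hq)).mpr hSq
    · exact (hL q r hrne).mpr hLr
    · exact aSz_join hq hr⟩
  left_inv := fun x => Subtype.ext (arch_rest_append x.1)
  right_inv := fun y => by
    obtain ⟨⟨q, hq, hSq⟩, ⟨r, hr, hrne, hLr⟩⟩ := y
    have h1 : archOf (q ++ r) = q := archOf_join hq hr
    have h2 : restOf (q ++ r) = r := restOf_join hq hr
    simp only [Prod.mk.injEq, Subtype.mk.injEq]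
    exact ⟨h1, h2⟩

theorem master_card (n : ℕ)
    (hS : ∀ q r : List (ℤ × ℤ), q ≠ [] → (S (q ++ r) ↔ S q))
    (hL : ∀ q r : List (ℤ × ℤ), r ≠ [] → (L (q ++ r) ↔ L r)) :
    Nat.card {p : List (ℤ × ℤ) // Exc n p ∧ p ≠ [] ∧ S p ∧ L p}
      = (∑ k ∈ Finset.range n,
          Nat.card {q : List (ℤ × ℤ) // IsArch k q ∧ S q} *
            Nat.card {r : List (ℤ × ℤ) // Exc (n - k) r ∧ r ≠ [] ∧ L r})
        + Nat.card {q : List (ℤ × ℤ) // IsArch n q ∧ S q ∧ L q} := by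
  haveI : Finite {p : List (ℤ × ℤ) // Exc n p ∧ p ≠ [] ∧ S p ∧ L p} :=
    finite_exc_sub n _
  rw [card_range_partition _ aSz (n + 1) (fun p hp => by
      have := (split_spec hp.1 hp.2.1).2.2.2
      omega)]
  rw [Finset.sum_range_succ]
  congr 1
  · apply Finset.sum_congr rfl
    intro k hk
    have hk' : k < n := Finset.mem_range.mp hk
    rw [Nat.card_congr (splitEquiv n k hk' hS hL), Nat.card_prod]
  · apply Nat.card_congr
    apply Equiv.subtypeEquivRight
    intro p
    constructor
    · rintro ⟨⟨hE, hne, hSp, hLp⟩, hsz⟩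
      exact ⟨(aSz_eq_iff_arch hE hne).mp hsz, hSp, hLp⟩
    · rintro ⟨hA, hSp, hLp⟩
      exact ⟨⟨arch_exc hA, arch_ne_nil hA, hSp, hLp⟩,
        (aSz_eq_iff_arch (arch_exc hA) (arch_ne_nil hA)).mpr hA⟩

end Master

end GF6
namespace GF6

lemma card_iff {α : Type*} {P Q : α → Prop} (h : ∀ x, P x ↔ Q x) :
    Nat.card {x // P x} = Nat.card {x // Q x} :=
  Nat.card_congr (Equiv.subtypeEquivRight h)

noncomputable def cA (n : ℕ) : ℕ := Nat.card {p : List (ℤ × ℤ) // Exc n p}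
noncomputable def cE (n : ℕ) : ℕ := Nat.card {p : List (ℤ × ℤ) // Exc n p ∧ p ≠ []}
noncomputable def cU (n : ℕ) : ℕ := Nat.card {q : List (ℤ × ℤ) // IsArch n q ∧ SU q}
noncomputable def cArch (n : ℕ) : ℕ := Nat.card {q : List (ℤ × ℤ) // IsArch n q}
noncomputable def cR (n : ℕ) : ℕ := Nat.card {p : List (ℤ × ℤ) // Exc n p ∧ ED p}
noncomputable def cV (n : ℕ) : ℕ := Nat.card {p : List (ℤ × ℤ) // Exc n p ∧ SU p}
noncomputable def cAA (n : ℕ) : ℕ := Nat.card {p : List (ℤ × ℤ) // Exc n p ∧ SU p ∧ ED p}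

lemma cA_zero : cA 0 = 1 := by
  haveI : Nonempty {p : List (ℤ × ℤ) // Exc 0 p} := ⟨⟨[], exc_nil⟩⟩
  haveI : Subsingleton {p : List (ℤ × ℤ) // Exc 0 p} :=
    ⟨fun a b => Subtype.ext (by rw [exc_zero_eq_nil a.2, exc_zero_eq_nil b.2])⟩
  exact Nat.card_unique

lemma cE_zero : cE 0 = 0 := by
  haveI : IsEmpty {p : List (ℤ × ℤ) // Exc 0 p ∧ p ≠ []} :=
    ⟨fun x => x.2.2 (exc_zero_eq_nil x.2.1)⟩
  exact Nat.card_of_isEmpty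

lemma cR_zero : cR 0 = 0 := by
  haveI : IsEmpty {p : List (ℤ × ℤ) // Exc 0 p ∧ ED p} :=
    ⟨fun x => (ed_ne_nil x.2.2) (exc_zero_eq_nil x.2.1)⟩
  exact Nat.card_of_isEmpty

lemma cV_zero : cV 0 = 0 := by
  haveI : IsEmpty {p : List (ℤ × ℤ) // Exc 0 p ∧ SU p} :=
    ⟨fun x => (su_ne_nil x.2.2) (exc_zero_eq_nil x.2.1)⟩
  exact Nat.card_of_isEmpty

lemma cAA_zero : cAA 0 = 0 := by
  haveI : IsEmpty {p : List (ℤ × ℤ) // Exc 0 p ∧ SU p ∧ ED p} :=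
    ⟨fun x => (su_ne_nil x.2.2.1) (exc_zero_eq_nil x.2.1)⟩
  exact Nat.card_of_isEmpty

lemma cU_zero : cU 0 = 0 := by
  haveI : IsEmpty {q : List (ℤ × ℤ) // IsArch 0 q ∧ SU q} :=
    ⟨fun x => Nat.lt_irrefl 0 (arch_k_pos x.2.1)⟩
  exact Nat.card_of_isEmpty

lemma cA_eq (n : ℕ) : cA n = (if n = 0 then 1 else 0) + cE n := by
  rcases Nat.eq_zero_or_pos n with rfl | hn
  · simp [cA_zero, cE_zero]
  · rw [if_neg (by omega : ¬ n = 0), zero_add, cA, cE]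
    apply card_iff
    intro p
    exact ⟨fun h => ⟨h, exc_ne_nil h hn⟩, fun h => h.1⟩

lemma cArch_eq (n : ℕ) : cArch n = cU n + (if n = 1 then 1 else 0) := by
  classical
  haveI : Finite {q : List (ℤ × ℤ) // IsArch n q} :=
    (((finite_exc n).subset (fun q hq => arch_exc hq)).to_subtype)
  rw [cArch, card_split (IsArch n) SU]
  congr 1
  rcases eq_or_ne n 1 with rfl | hn
  · rw [if_pos rfl]
    haveI : Nonempty {q : List (ℤ × ℤ) // IsArch 1 q ∧ ¬ SU q} :=
      ⟨⟨[((2 : ℤ), (0 : ℤ))], arch_flat_isArch, by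
        rintro ⟨s, hs, hpos⟩
        simp at hs
        rw [← hs] at hpos
        norm_num at hpos⟩⟩
    haveI : Subsingleton {q : List (ℤ × ℤ) // IsArch 1 q ∧ ¬ SU q} :=
      ⟨fun a b => Subtype.ext (by
        rw [(arch_not_su a.2.1 a.2.2).1, (arch_not_su b.2.1 b.2.2).1])⟩
    exact Nat.card_unique
  · rw [if_neg hn]
    haveI : IsEmpty {q : List (ℤ × ℤ) // IsArch n q ∧ ¬ SU q} :=
      ⟨fun x => hn (arch_not_su x.2.1 x.2.2).2⟩
    exact Nat.card_of_isEmpty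

section Massage

lemma cm1 (m : ℕ) : Nat.card {p : List (ℤ × ℤ) // Exc m p ∧ p ≠ [] ∧ True ∧ True} = cE m :=
  card_iff (by tauto)
lemma cm2 (m : ℕ) : Nat.card {q : List (ℤ × ℤ) // IsArch m q ∧ True} = cArch m :=
  card_iff (by tauto)
lemma cm3 (m : ℕ) : Nat.card {r : List (ℤ × ℤ) // Exc m r ∧ r ≠ [] ∧ True} = cE m :=
  card_iff (by tauto)
lemma cm4 (m : ℕ) : Nat.card {q : List (ℤ × ℤ) // IsArch m q ∧ True ∧ True} = cArch m :=
  card_iff (by tauto)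
lemma cm5 (m : ℕ) : Nat.card {p : List (ℤ × ℤ) // Exc m p ∧ p ≠ [] ∧ True ∧ ED p} = cR m :=
  card_iff (fun p => ⟨fun h => ⟨h.1, h.2.2.2⟩, fun h => ⟨h.1, ed_ne_nil h.2, trivial, h.2⟩⟩)
lemma cm6 (m : ℕ) : Nat.card {r : List (ℤ × ℤ) // Exc m r ∧ r ≠ [] ∧ ED r} = cR m :=
  card_iff (fun p => ⟨fun h => ⟨h.1, h.2.2⟩, fun h => ⟨h.1, ed_ne_nil h.2, h.2⟩⟩)
lemma cm7 (m : ℕ) : Nat.card {q : List (ℤ × ℤ) // IsArch m q ∧ True ∧ ED q} = cU m :=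
  card_iff (fun q => ⟨fun h => ⟨h.1, arch_ed_su h.1 h.2.2⟩,
    fun h => ⟨h.1, trivial, arch_su_ed h.1 h.2⟩⟩)
lemma cm8 (m : ℕ) : Nat.card {p : List (ℤ × ℤ) // Exc m p ∧ p ≠ [] ∧ SU p ∧ True} = cV m :=
  card_iff (fun p => ⟨fun h => ⟨h.1, h.2.2.1⟩, fun h => ⟨h.1, su_ne_nil h.2, h.2, trivial⟩⟩)
lemma cm9 (m : ℕ) : Nat.card {q : List (ℤ × ℤ) // IsArch m q ∧ SU q} = cU m := rfl
lemma cm10 (m : ℕ) : Nat.card {q : List (ℤ × ℤ) // IsArch m q ∧ SU q ∧ True} = cU m :=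
  card_iff (by tauto)
lemma cm11 (m : ℕ) : Nat.card {p : List (ℤ × ℤ) // Exc m p ∧ p ≠ [] ∧ SU p ∧ ED p} = cAA m :=
  card_iff (fun p => ⟨fun h => ⟨h.1, h.2.2⟩, fun h => ⟨h.1, su_ne_nil h.2.1, h.2⟩⟩)
lemma cm12 (m : ℕ) : Nat.card {q : List (ℤ × ℤ) // IsArch m q ∧ SU q ∧ ED q} = cU m :=
  card_iff (fun q => ⟨fun h => ⟨h.1, h.2.1⟩, fun h => ⟨h.1, h.2, arch_su_ed h.1 h.2⟩⟩)

end Massage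

/-- master instance: all excursions -/
lemma M1 (n : ℕ) :
    cE n = (∑ k ∈ Finset.range n, cArch k * cE (n - k)) + cArch n := by
  have h := master_card (S := fun _ => True) (L := fun _ => True) n
    (fun q r hq => Iff.rfl) (fun q r hr => Iff.rfl)
  simpa only [cm1, cm2, cm3, cm4] using h

/-- master instance: excursions ending with a down step -/
lemma M2 (n : ℕ) :
    cR n = (∑ k ∈ Finset.range n, cArch k * cR (n - k)) + cU n := by
  have h := master_card (S := fun _ => True) (L := ED) n
    (fun q r hq => Iff.rfl) (fun q r hr => ed_append hr)
  simpa only [cm5, cm2, cm6, cm7] using h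

/-- master instance: excursions starting with an up step -/
lemma M3 (n : ℕ) :
    cV n = (∑ k ∈ Finset.range n, cU k * cE (n - k)) + cU n := by
  have h := master_card (S := SU) (L := fun _ => True) n
    (fun q r hq => su_append hq) (fun q r hr => Iff.rfl)
  simpa only [cm8, cm9, cm3, cm10] using h

/-- master instance: excursions starting up and ending down -/
lemma M4 (n : ℕ) :
    cAA n = (∑ k ∈ Finset.range n, cU k * cR (n - k)) + cU n := by
  have h := master_card (S := SU) (L := ED) n
    (fun q r hq => su_append hq) (fun q r hr => ed_append hr)
  simpa only [cm11, cm9, cm6, cm12] using h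

end GF6
namespace GF6

/-- head is the minimal up step -/
def H1 (p : List (ℤ × ℤ)) : Prop := p.head? = some (1, 1)
/-- last is the minimal down step -/
def L1 (p : List (ℤ × ℤ)) : Prop := p.getLast? = some (1, -1)

def bh : List (ℤ × ℤ) → List (ℤ × ℤ)
  | [] => []
  | s :: t => (s.1 + 1, s.2 + 1) :: t
def dh : List (ℤ × ℤ) → List (ℤ × ℤ)
  | [] => []
  | s :: t => (s.1 - 1, s.2 - 1) :: t
def bl (l : List (ℤ × ℤ)) : List (ℤ × ℤ) :=
  l.dropLast ++ (l.getLast?.map fun e => (e.1 + 1, e.2 - 1)).toList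
def dl (l : List (ℤ × ℤ)) : List (ℤ × ℤ) :=
  l.dropLast ++ (l.getLast?.map fun e => (e.1 - 1, e.2 + 1)).toList

lemma bl_concat (t : List (ℤ × ℤ)) (e : ℤ × ℤ) :
    bl (t ++ [e]) = t ++ [(e.1 + 1, e.2 - 1)] := by
  simp [bl, List.dropLast_concat, List.getLast?_concat]
lemma dl_concat (t : List (ℤ × ℤ)) (e : ℤ × ℤ) :
    dl (t ++ [e]) = t ++ [(e.1 - 1, e.2 + 1)] := by
  simp [dl, List.dropLast_concat, List.getLast?_concat]

lemma take_append_single {l : List (ℤ × ℤ)} (x : ℤ × ℤ) {j : ℕ} (h : j ≤ l.length) :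
    (l ++ [x]).take j = l.take j := by
  rw [List.take_append]
  have h0 : j - l.length = 0 := by omega
  simp [h0]

/-- generic construction of an arch of size n+1 lying one level above an excursion -/
lemma build_arch {n : ℕ} {q p : List (ℤ × ℤ)} (hq : Exc n q)
    (hst : stepsIn p) (hw : wsum p = wsum q + 2) (hv : vsum p = 0) (hne : p ≠ [])
    (hkey : ∀ m : ℕ, 0 < m → m < p.length → ∃ j, vsum (p.take m) = 1 + vsum (q.take j)) :
    IsArch (n + 1) p := by
  have hNN : NN p := by
    intro m
    rcases Nat.eq_zero_or_pos m with rfl | hm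
    · simp
    rcases le_or_gt p.length m with hle | hlt
    · rw [List.take_of_length_le hle, hv]
    · obtain ⟨j, hj⟩ := hkey m hm hlt
      have := exc_nn hq j
      omega
  refine ⟨⟨hst, ?_, hv, hNN⟩, hne, ?_⟩
  · rw [hw, exc_wsum hq]; push_cast; ring
  · intro m hm hmlt
    obtain ⟨j, hj⟩ := hkey m hm hmlt
    have := exc_nn hq j
    omega

/-- decomposition of an arch which starts with an up step -/
lemma arch_su_decomp {n : ℕ} {p : List (ℤ × ℤ)} (h : IsArch n p) (hsu : SU p) :
    ∃ (s e : ℤ × ℤ) (mid : List (ℤ × ℤ)), p = s :: (mid ++ [e]) ∧ 0 < s.2 ∧ s = (s.2, s.2)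
      ∧ e.2 < 0 ∧ e = (-e.2, e.2) := by
  obtain ⟨s, t, rfl⟩ := List.exists_cons_of_ne_nil (arch_ne_nil h)
  have hs2 : 0 < s.2 := su_cons.mp hsu
  have hsup : s = (s.2, s.2) := by
    have := s6_up (exc_steps (arch_exc h) s (by simp)) hs2
    exact this
  obtain ⟨e, he1, he2⟩ := arch_su_ed h hsu
  have ht : t ≠ [] := by
    rintro rfl
    simp at he1
    rw [← he1] at he2
    omega
  have he1' : t.getLast? = some e := by
    have : (s :: t) = [s] ++ t := rfl
    rw [this, List.getLast?_append] at he1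
    cases hgl : t.getLast? with
    | none => exact absurd (List.getLast?_eq_none_iff.mp hgl) ht
    | some x =>
        rw [hgl] at he1
        simp at he1
        exact congrArg _ he1
  have hedec : t.dropLast ++ [t.getLast ht] = t := List.dropLast_append_getLast ht
  have hlast : t.getLast ht = e := by
    have h2 := (List.getLast?_eq_getLast ht).symm.trans he1'
    exact Option.some_injective _ h2
  have hdown : e = (-e.2, e.2) := by
    have hmem : e ∈ S6 := exc_steps (arch_exc h) e (by
      rw [← hedec, hlast] at *
      simp)
    exact s6_down hmem he2
  exact ⟨s, e, t.dropLast, by rw [← hlast, hedec], hs2, hsup, he2, hdown⟩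

lemma exc_cons_le {n : ℕ} {s : ℤ × ℤ} {t : List (ℤ × ℤ)} : (s :: t).length = t.length + 1 := by
  simp

section PeelEquivs

/-- small-head, small-last class -/
noncomputable def Eff (n : ℕ) :
    {q : List (ℤ × ℤ) // Exc n q} ≃
      {p : List (ℤ × ℤ) // ((IsArch (n + 1) p ∧ SU p) ∧ H1 p) ∧ L1 p} where
  toFun := fun x => ⟨((1 : ℤ), (1 : ℤ)) :: (x.1 ++ [((1 : ℤ), (-1 : ℤ))]), by
    obtain ⟨q, hq⟩ := x
    simp only
    have harch : IsArch (n + 1) ((1, 1) :: (q ++ [(1, -1)])) := by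
      apply build_arch hq
      · intro z hz
        rcases List.mem_cons.mp hz with rfl | hz'
        · exact s6_mem_up 1 one_pos
        rcases List.mem_append.mp hz' with h | h
        · exact exc_steps hq z h
        · simp at h
          rw [h]
          exact s6_mem_down 1 one_pos
      · simp only [wsum_cons, wsum_append, wsum_singleton, wsum_nil]
        omega
      · simp only [vsum_cons, vsum_append, vsum_singleton, vsum_nil, exc_vsum hq]
        try norm_num
      · simp
      · intro m hm hmlt
        obtain ⟨m', rfl⟩ := Nat.exists_eq_succ_of_ne_zero (by omega : m ≠ 0)
        refine ⟨m', ?_⟩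
        rw [List.take_succ_cons, vsum_cons,
          take_append_single _ (by simp at hmlt; omega)]
        try norm_num
    refine ⟨⟨⟨harch, ?_⟩, ?_⟩, ?_⟩
    · exact su_cons.mpr (by norm_num)
    · rfl
    · show (((1, 1) : ℤ × ℤ) :: (q ++ [(1, -1)])).getLast? = some (1, -1)
      rw [← List.cons_append, List.getLast?_concat]⟩
  invFun := fun y => ⟨y.1.tail.dropLast, by
    obtain ⟨p, ⟨⟨hA, hsu⟩, hh1⟩, hl1⟩ := y
    obtain ⟨s, e, mid, hdec, hs2, hsup, he2, hedown⟩ := arch_su_decomp hA hsu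
    have hs11 : s = (1, 1) := by
      rw [hdec] at hh1
      simpa [H1] using hh1
    have he11 : e = (1, -1) := by
      rw [hdec, L1] at hl1
      rw [← List.cons_append, List.getLast?_concat] at hl1
      simpa using hl1
    subst hdec
    simp only [List.tail_cons, List.dropLast_concat]
    -- mid is an excursion of size n
    have hw : wsum ((s :: (mid ++ [e]))) = 2 * (n + 1 : ℕ) := exc_wsum (arch_exc hA)
    have hv : vsum ((s :: (mid ++ [e]))) = 0 := exc_vsum (arch_exc hA)
    rw [hs11, he11] at hw hv
    simp at hw hv
    refine ⟨?_, ?_, by omega, ?_⟩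
    · intro z hz
      exact exc_steps (arch_exc hA) z (by simp [hz])
    · push_cast at hw ⊢
      omega
    · intro j
      rcases le_or_gt mid.length j with hle | hlt
      · rw [List.take_of_length_le hle]
        omega
      · have hkey := arch_pos hA (j + 1) (by omega) (by
          rw [hs11, he11]
          simp
          omega)
        rw [hs11, he11] at hkey
        rw [List.take_succ_cons, vsum_cons, take_append_single _ (by omega)] at hkey
        simp at hkey
        omega⟩
  left_inv := fun x => Subtype.ext (by simp [List.dropLast_concat])
  right_inv := fun y => by
    obtain ⟨p, ⟨⟨hA, hsu⟩, hh1⟩, hl1⟩ := y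
    obtain ⟨s, e, mid, hdec, hs2, hsup, he2, hedown⟩ := arch_su_decomp hA hsu
    have hs11 : s = (1, 1) := by
      rw [hdec] at hh1
      simpa [H1] using hh1
    have he11 : e = (1, -1) := by
      rw [hdec, L1] at hl1
      rw [← List.cons_append, List.getLast?_concat] at hl1
      simpa using hl1
    apply Subtype.ext
    simp only
    rw [hdec, hs11, he11]
    simp [List.dropLast_concat]

end PeelEquivs

end GF6
namespace GF6

lemma H1_cons {s : ℤ × ℤ} {t : List (ℤ × ℤ)} : H1 (s :: t) ↔ s = ((1 : ℤ), (1 : ℤ)) := by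
  simp [H1]

lemma L1_concat {x : ℤ × ℤ} {t : List (ℤ × ℤ)} : L1 (t ++ [x]) ↔ x = ((1 : ℤ), (-1 : ℤ)) := by
  simp [L1, List.getLast?_concat]

lemma ed_decomp {q : List (ℤ × ℤ)} (h : ED q) : ∃ t e, q = t ++ [(e : ℤ × ℤ)] ∧ e.2 < 0 := by
  obtain ⟨e, he1, he2⟩ := h
  have hne : q ≠ [] := ed_ne_nil ⟨e, he1, he2⟩
  refine ⟨q.dropLast, e, ?_, he2⟩
  have h2 := List.dropLast_append_getLast hne
  have h3 : q.getLast hne = e := by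
    have := (List.getLast?_eq_getLast hne).symm.trans he1
    exact Option.some_injective _ this
  rw [← h3]
  exact h2.symm

/-- big-head, small-last class -/
noncomputable def Etf (n : ℕ) :
    {q : List (ℤ × ℤ) // Exc n q ∧ SU q} ≃
      {p : List (ℤ × ℤ) // ((IsArch (n + 1) p ∧ SU p) ∧ ¬ H1 p) ∧ L1 p} where
  toFun := fun x => ⟨bh x.1 ++ [((1 : ℤ), (-1 : ℤ))], by
    obtain ⟨q, hq, hsu⟩ := x
    obtain ⟨s, t, rfl⟩ := List.exists_cons_of_ne_nil (su_ne_nil hsu)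
    have hs2 : 0 < s.2 := su_cons.mp hsu
    have hsup : s = (s.2, s.2) := s6_up (exc_steps hq s (by simp)) hs2
    simp only [bh]
    have harch : IsArch (n + 1) ((s.1 + 1, s.2 + 1) :: t ++ [(1, -1)]) := by
      apply build_arch hq
      · intro z hz
        rcases List.mem_cons.mp hz with rfl | hz'
        · have h0 : ((s.1 + 1, s.2 + 1) : ℤ × ℤ) = (s.2 + 1, s.2 + 1) := by rw [hsup]
          rw [h0]
          exact s6_mem_up (s.2 + 1) (by omega)
        rcases List.mem_append.mp hz' with h | h
        · exact exc_steps hq z (by simp [h])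
        · simp at h
          rw [h]
          exact s6_mem_down 1 one_pos
      · simp only [List.cons_append, wsum_cons, wsum_append, wsum_singleton, wsum_nil]
        omega
      · simp only [List.cons_append, vsum_cons, vsum_append, vsum_singleton, vsum_nil]
        have := exc_vsum hq
        simp only [vsum_cons] at this
        omega
      · simp
      · intro m hm hmlt
        obtain ⟨m', rfl⟩ := Nat.exists_eq_succ_of_ne_zero (by omega : m ≠ 0)
        refine ⟨m' + 1, ?_⟩
        rw [List.cons_append, List.take_succ_cons, vsum_cons,
          take_append_single _ (by simp at hmlt; omega), List.take_succ_cons, vsum_cons]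
        ring
    refine ⟨⟨⟨harch, ?_⟩, ?_⟩, ?_⟩
    · rw [List.cons_append]
      exact su_cons.mpr (by simp; omega)
    · intro hh1
      rw [List.cons_append, H1_cons] at hh1
      simp at hh1
      omega
    · exact L1_concat.mpr rfl⟩
  invFun := fun y => ⟨dh y.1.dropLast, by
    obtain ⟨p, ⟨⟨hA, hsu⟩, hh1⟩, hl1⟩ := y
    obtain ⟨s, e, mid, hdec, hs2, hsup, he2, hedown⟩ := arch_su_decomp hA hsu
    have he11 : e = (1, -1) := by
      rw [hdec, ← List.cons_append, L1_concat] at hl1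
      exact hl1
    have hs1ge : 1 < s.2 := by
      rcases lt_or_eq_of_le (by omega : 1 ≤ s.2) with h | h
      · exact h
      · exfalso
        apply hh1
        rw [hdec, H1_cons]
        rw [hsup, ← h]
    subst hdec
    have hdl : ((s :: (mid ++ [e])).dropLast) = s :: mid := by
      rw [← List.cons_append, List.dropLast_concat]
    rw [hdl]
    simp only [dh]
    have hw := exc_wsum (arch_exc hA)
    have hv := exc_vsum (arch_exc hA)
    simp only [wsum_cons, wsum_append, wsum_singleton, wsum_nil] at hw
    simp only [vsum_cons, vsum_append, vsum_singleton, vsum_nil] at hv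
    rw [he11] at hw hv
    simp at hw hv
    have hs1 : s.1 = s.2 := by rw [hsup]
    refine ⟨⟨?_, ?_, by simp; omega, ?_⟩, ?_⟩
    · intro z hz
      rcases List.mem_cons.mp hz with rfl | hz'
      · have h0 : ((s.1 - 1, s.2 - 1) : ℤ × ℤ) = (s.2 - 1, s.2 - 1) := by rw [hs1]
        rw [h0]
        exact s6_mem_up (s.2 - 1) (by omega)
      · exact exc_steps (arch_exc hA) z (by simp [hz'])
    · simp only [wsum_cons]
      push_cast at hw ⊢
      omega
    · intro j
      rcases Nat.eq_zero_or_pos j with rfl | hj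
      · simp
      obtain ⟨j', rfl⟩ := Nat.exists_eq_succ_of_ne_zero (by omega : j ≠ 0)
      simp only [Nat.succ_eq_add_one]
      rcases le_or_gt (mid.length + 1) j' with hle | hlt
      · rw [List.take_of_length_le (by simp; omega)]
        simp
        omega
      · have hkey := arch_pos hA (j' + 1) (by omega) (by simp; omega)
        rw [List.take_succ_cons, vsum_cons,
          take_append_single _ (by omega)] at hkey
        rw [List.take_succ_cons, vsum_cons]
        omega
    · exact su_cons.mpr (by simp; omega)⟩
  left_inv := fun x => by
    obtain ⟨q, hq, hsu⟩ := x
    obtain ⟨s, t, rfl⟩ := List.exists_cons_of_ne_nil (su_ne_nil hsu)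
    apply Subtype.ext
    show dh ((bh (s :: t) ++ [((1 : ℤ), (-1 : ℤ))]).dropLast) = s :: t
    rw [show bh (s :: t) = (s.1 + 1, s.2 + 1) :: t from rfl, List.dropLast_concat]
    show (s.1 + 1 - 1, s.2 + 1 - 1) :: t = s :: t
    simp
  right_inv := fun y => by
    obtain ⟨p, ⟨⟨hA, hsu⟩, hh1⟩, hl1⟩ := y
    obtain ⟨s, e, mid, hdec, hs2, hsup, he2, hedown⟩ := arch_su_decomp hA hsu
    have he11 : e = (1, -1) := by
      rw [hdec, ← List.cons_append, L1_concat] at hl1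
      exact hl1
    apply Subtype.ext
    show bh (dh (p.dropLast)) ++ [((1 : ℤ), (-1 : ℤ))] = p
    rw [hdec, he11, ← List.cons_append, List.dropLast_concat]
    rw [show dh (s :: mid) = (s.1 - 1, s.2 - 1) :: mid from rfl]
    rw [show bh ((s.1 - 1, s.2 - 1) :: mid) = (s.1 - 1 + 1, s.2 - 1 + 1) :: mid from rfl]
    simp

/-- small-head, big-last class -/
noncomputable def Eft (n : ℕ) :
    {q : List (ℤ × ℤ) // Exc n q ∧ ED q} ≃
      {p : List (ℤ × ℤ) // ((IsArch (n + 1) p ∧ SU p) ∧ H1 p) ∧ ¬ L1 p} where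
  toFun := fun x => ⟨((1 : ℤ), (1 : ℤ)) :: bl x.1, by
    obtain ⟨q, hq, hed⟩ := x
    obtain ⟨t, e, rfl, he2⟩ := ed_decomp hed
    have hemem : e ∈ S6 := exc_steps hq e (by simp)
    have hedown : e = (-e.2, e.2) := s6_down hemem he2
    have he1 : e.1 = -e.2 := by rw [hedown]
    rw [bl_concat]
    have harch : IsArch (n + 1) ((1, 1) :: (t ++ [(e.1 + 1, e.2 - 1)])) := by
      apply build_arch hq
      · intro z hz
        rcases List.mem_cons.mp hz with rfl | hz'
        · exact s6_mem_up 1 one_pos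
        rcases List.mem_append.mp hz' with h | h
        · exact exc_steps hq z (by simp [h])
        · simp at h
          rw [h]
          have h0 : ((e.1 + 1, e.2 - 1) : ℤ × ℤ) = (e.1 + 1, -(e.1 + 1)) := by
            rw [Prod.mk.injEq]
            omega
          rw [h0]
          exact s6_mem_down (e.1 + 1) (by omega)
      · simp only [wsum_cons, wsum_append, wsum_singleton, wsum_nil]
        omega
      · simp only [vsum_cons, vsum_append, vsum_singleton, vsum_nil]
        have := exc_vsum hq
        simp only [vsum_append, vsum_singleton, vsum_nil] at this
        omega
      · simp
      · intro m hm hmlt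
        obtain ⟨m', rfl⟩ := Nat.exists_eq_succ_of_ne_zero (by omega : m ≠ 0)
        refine ⟨m', ?_⟩
        rw [List.take_succ_cons, vsum_cons,
          take_append_single _ (by simp at hmlt; omega),
          take_append_single _ (by simp at hmlt; omega)]
        try norm_num
    refine ⟨⟨⟨harch, ?_⟩, ?_⟩, ?_⟩
    · exact su_cons.mpr (by norm_num)
    · rfl
    · intro hl1
      rw [← List.cons_append, L1_concat] at hl1
      simp at hl1
      omega⟩
  invFun := fun y => ⟨dl y.1.tail, by
    obtain ⟨p, ⟨⟨hA, hsu⟩, hh1⟩, hl1⟩ := y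
    obtain ⟨s, e, mid, hdec, hs2, hsup, he2, hedown⟩ := arch_su_decomp hA hsu
    have hs11 : s = (1, 1) := by
      rw [hdec, H1_cons] at hh1
      exact hh1
    have he1 : e.1 = -e.2 := by rw [hedown]
    have he1ge : 1 < e.1 := by
      rcases lt_or_eq_of_le (by omega : 1 ≤ e.1) with h | h
      · exact h
      · exfalso
        apply hl1
        rw [hdec, ← List.cons_append]
        refine L1_concat.mpr ?_
        rw [Prod.mk.injEq]
        omega
    subst hdec
    simp only [List.tail_cons, dl_concat]
    have hw := exc_wsum (arch_exc hA)
    have hv := exc_vsum (arch_exc hA)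
    simp only [wsum_cons, wsum_append, wsum_singleton, wsum_nil] at hw
    simp only [vsum_cons, vsum_append, vsum_singleton, vsum_nil] at hv
    rw [hs11] at hw hv
    simp at hw hv
    refine ⟨⟨?_, ?_, ?_, ?_⟩, ?_⟩
    · intro z hz
      rcases List.mem_append.mp hz with h | h
      · exact exc_steps (arch_exc hA) z (by simp [h])
      · simp at h
        rw [h]
        have h0 : ((e.1 - 1, e.2 + 1) : ℤ × ℤ) = (e.1 - 1, -(e.1 - 1)) := by
          rw [Prod.mk.injEq]
          omega
        rw [h0]
        exact s6_mem_down (e.1 - 1) (by omega)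
    · simp only [wsum_append, wsum_singleton, wsum_nil]
      push_cast at hw ⊢
      omega
    · simp only [vsum_append, vsum_singleton, vsum_nil]
      omega
    · intro j
      rcases le_or_gt (mid.length + 1) j with hle | hlt
      · rw [List.take_of_length_le (by simp; omega)]
        simp only [vsum_append, vsum_singleton, vsum_nil]
        omega
      · rw [take_append_single _ (by omega)]
        have hkey := arch_pos hA (j + 1) (by omega) (by simp; omega)
        rw [List.take_succ_cons, vsum_cons,
          take_append_single _ (by omega)] at hkey
        rw [hs11] at hkey
        simp at hkey
        omega
    · rw [ED, List.getLast?_concat]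
      exact ⟨(e.1 - 1, e.2 + 1), rfl, by simp; omega⟩⟩
  left_inv := fun x => by
    obtain ⟨q, hq, hed⟩ := x
    obtain ⟨t, e, rfl, he2⟩ := ed_decomp hed
    apply Subtype.ext
    show dl ((((1 : ℤ), (1 : ℤ)) :: bl (t ++ [e])).tail) = t ++ [e]
    rw [bl_concat, List.tail_cons, dl_concat]
    simp
  right_inv := fun y => by
    obtain ⟨p, ⟨⟨hA, hsu⟩, hh1⟩, hl1⟩ := y
    obtain ⟨s, e, mid, hdec, hs2, hsup, he2, hedown⟩ := arch_su_decomp hA hsu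
    have hs11 : s = (1, 1) := by
      rw [hdec, H1_cons] at hh1
      exact hh1
    apply Subtype.ext
    show ((1 : ℤ), (1 : ℤ)) :: bl (dl p.tail) = p
    rw [hdec, hs11, List.tail_cons, dl_concat, bl_concat]
    simp

/-- big-head, big-last class -/
noncomputable def Ett (n : ℕ) :
    {q : List (ℤ × ℤ) // Exc n q ∧ SU q ∧ ED q} ≃
      {p : List (ℤ × ℤ) // ((IsArch (n + 1) p ∧ SU p) ∧ ¬ H1 p) ∧ ¬ L1 p} where
  toFun := fun x => ⟨bh (bl x.1), by
    obtain ⟨q, hq, hsu, hed⟩ := x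
    obtain ⟨t, e, hdec, he2⟩ := ed_decomp hed
    obtain ⟨s, t', rfl⟩ := List.exists_cons_of_ne_nil (su_ne_nil hsu)
    have hs2 : 0 < s.2 := su_cons.mp hsu
    have hsup : s = (s.2, s.2) := s6_up (exc_steps hq s (by simp)) hs2
    have hmid : ∃ mid, t' = mid ++ [e] := by
      rcases t with _ | ⟨a, t0⟩
      · exfalso
        simp at hdec
        have hse : s = e := hdec.1
        rw [hse] at hs2
        omega
      · rw [List.cons_append] at hdec
        injection hdec with h1 h2
        exact ⟨t0, h2⟩
    obtain ⟨mid, rfl⟩ := hmid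
    have hemem : e ∈ S6 := exc_steps hq e (by simp)
    have hedown : e = (-e.2, e.2) := s6_down hemem he2
    have he1 : e.1 = -e.2 := by rw [hedown]
    have hblq : bl (s :: (mid ++ [e])) = (s :: mid) ++ [(e.1 + 1, e.2 - 1)] := by
      rw [← List.cons_append, bl_concat]
    rw [hblq]
    rw [show bh ((s :: mid) ++ [(e.1 + 1, e.2 - 1)])
        = (s.1 + 1, s.2 + 1) :: (mid ++ [(e.1 + 1, e.2 - 1)]) from rfl]
    have harch : IsArch (n + 1) ((s.1 + 1, s.2 + 1) :: (mid ++ [(e.1 + 1, e.2 - 1)])) := by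
      apply build_arch hq
      · intro z hz
        rcases List.mem_cons.mp hz with rfl | hz'
        · have h0 : ((s.1 + 1, s.2 + 1) : ℤ × ℤ) = (s.2 + 1, s.2 + 1) := by rw [hsup]
          rw [h0]
          exact s6_mem_up (s.2 + 1) (by omega)
        rcases List.mem_append.mp hz' with h | h
        · exact exc_steps hq z (by simp [h])
        · simp at h
          rw [h]
          have h0 : ((e.1 + 1, e.2 - 1) : ℤ × ℤ) = (e.1 + 1, -(e.1 + 1)) := by
            rw [Prod.mk.injEq]
            omega
          rw [h0]
          exact s6_mem_down (e.1 + 1) (by omega)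
      · simp only [List.cons_append, wsum_cons, wsum_append, wsum_singleton, wsum_nil]
        omega
      · have := exc_vsum hq
        simp only [List.cons_append, vsum_cons, vsum_append, vsum_singleton, vsum_nil] at this ⊢
        omega
      · simp
      · intro m hm hmlt
        obtain ⟨m', rfl⟩ := Nat.exists_eq_succ_of_ne_zero (by omega : m ≠ 0)
        refine ⟨m' + 1, ?_⟩
        rw [List.take_succ_cons, vsum_cons,
          take_append_single _ (by simp at hmlt; omega),
          List.take_succ_cons, vsum_cons,
          take_append_single _ (by simp at hmlt; omega)]
        ring
    refine ⟨⟨⟨harch, ?_⟩, ?_⟩, ?_⟩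
    · exact su_cons.mpr (by simp; omega)
    · intro hh1
      rw [H1_cons] at hh1
      simp at hh1
      omega
    · intro hl1
      rw [← List.cons_append, L1_concat] at hl1
      simp at hl1
      omega⟩
  invFun := fun y => ⟨dh (dl y.1), by
    obtain ⟨p, ⟨⟨hA, hsu⟩, hh1⟩, hl1⟩ := y
    obtain ⟨s, e, mid, hdec, hs2, hsup, he2, hedown⟩ := arch_su_decomp hA hsu
    have hs1ge : 1 < s.2 := by
      rcases lt_or_eq_of_le (by omega : 1 ≤ s.2) with h | h
      · exact h
      · exfalso
        apply hh1
        rw [hdec, H1_cons]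
        rw [hsup, ← h]
    have he1 : e.1 = -e.2 := by rw [hedown]
    have he1ge : 1 < e.1 := by
      rcases lt_or_eq_of_le (by omega : 1 ≤ e.1) with h | h
      · exact h
      · exfalso
        apply hl1
        rw [hdec, ← List.cons_append]
        refine L1_concat.mpr ?_
        rw [Prod.mk.injEq]
        omega
    subst hdec
    have hdl : dl (s :: (mid ++ [e])) = s :: (mid ++ [(e.1 - 1, e.2 + 1)]) := by
      rw [← List.cons_append, dl_concat, List.cons_append]
    rw [hdl]
    rw [show dh (s :: (mid ++ [(e.1 - 1, e.2 + 1)]))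
        = (s.1 - 1, s.2 - 1) :: (mid ++ [(e.1 - 1, e.2 + 1)]) from rfl]
    have hw := exc_wsum (arch_exc hA)
    have hv := exc_vsum (arch_exc hA)
    simp only [wsum_cons, wsum_append, wsum_singleton, wsum_nil] at hw
    simp only [vsum_cons, vsum_append, vsum_singleton, vsum_nil] at hv
    have hs1 : s.1 = s.2 := by rw [hsup]
    refine ⟨⟨?_, ?_, ?_, ?_⟩, ?_, ?_⟩
    · intro z hz
      rcases List.mem_cons.mp hz with rfl | hz'
      · have h0 : ((s.1 - 1, s.2 - 1) : ℤ × ℤ) = (s.2 - 1, s.2 - 1) := by rw [hs1]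
        rw [h0]
        exact s6_mem_up (s.2 - 1) (by omega)
      rcases List.mem_append.mp hz' with h | h
      · exact exc_steps (arch_exc hA) z (by simp [h])
      · simp at h
        rw [h]
        have h0 : ((e.1 - 1, e.2 + 1) : ℤ × ℤ) = (e.1 - 1, -(e.1 - 1)) := by
          rw [Prod.mk.injEq]
          omega
        rw [h0]
        exact s6_mem_down (e.1 - 1) (by omega)
    · simp only [wsum_cons, wsum_append, wsum_singleton, wsum_nil]
      push_cast at hw ⊢
      omega
    · simp only [vsum_cons, vsum_append, vsum_singleton, vsum_nil]
      omega
    · intro j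
      rcases Nat.eq_zero_or_pos j with rfl | hj
      · simp
      obtain ⟨j', rfl⟩ := Nat.exists_eq_succ_of_ne_zero (by omega : j ≠ 0)
      simp only [Nat.succ_eq_add_one]
      rcases le_or_gt (mid.length + 1) j' with hle | hlt
      · rw [List.take_of_length_le (by simp; omega)]
        simp only [vsum_cons, vsum_append, vsum_singleton, vsum_nil]
        omega
      · rw [List.take_succ_cons, vsum_cons, take_append_single _ (by omega)]
        have hkey := arch_pos hA (j' + 1) (by omega) (by simp; omega)
        rw [List.take_succ_cons, vsum_cons,
          take_append_single _ (by omega)] at hkey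
        omega
    · exact su_cons.mpr (by simp; omega)
    · rw [ED, ← List.cons_append, List.getLast?_concat]
      exact ⟨(e.1 - 1, e.2 + 1), rfl, by simp; omega⟩⟩
  left_inv := fun x => by
    obtain ⟨q, hq, hsu, hed⟩ := x
    obtain ⟨t, e, hdec, he2⟩ := ed_decomp hed
    obtain ⟨s, t', rfl⟩ := List.exists_cons_of_ne_nil (su_ne_nil hsu)
    have hmid : ∃ mid, t' = mid ++ [e] := by
      rcases t with _ | ⟨a, t0⟩
      · exfalso
        simp at hdec
        have hse : s = e := hdec.1
        have hs2 : 0 < s.2 := su_cons.mp hsu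
        rw [hse] at hs2
        omega
      · rw [List.cons_append] at hdec
        injection hdec with h1 h2
        exact ⟨t0, h2⟩
    obtain ⟨mid, rfl⟩ := hmid
    apply Subtype.ext
    show dh (dl (bh (bl (s :: (mid ++ [e]))))) = s :: (mid ++ [e])
    rw [show bl (s :: (mid ++ [e])) = (s :: mid) ++ [(e.1 + 1, e.2 - 1)] from by
      rw [← List.cons_append, bl_concat]]
    rw [show bh ((s :: mid) ++ [(e.1 + 1, e.2 - 1)])
        = ((s.1 + 1, s.2 + 1) :: mid) ++ [(e.1 + 1, e.2 - 1)] from rfl]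
    rw [dl_concat]
    rw [show dh (((s.1 + 1, s.2 + 1) :: mid) ++ [(e.1 + 1 - 1, e.2 - 1 + 1)])
        = (s.1 + 1 - 1, s.2 + 1 - 1) :: (mid ++ [(e.1 + 1 - 1, e.2 - 1 + 1)]) from rfl]
    simp
  right_inv := fun y => by
    obtain ⟨p, ⟨⟨hA, hsu⟩, hh1⟩, hl1⟩ := y
    obtain ⟨s, e, mid, hdec, hs2, hsup, he2, hedown⟩ := arch_su_decomp hA hsu
    apply Subtype.ext
    show bh (bl (dh (dl p))) = p
    rw [hdec]
    rw [show dl (s :: (mid ++ [e])) = s :: (mid ++ [(e.1 - 1, e.2 + 1)]) from by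
      rw [← List.cons_append, dl_concat, List.cons_append]]
    rw [show dh (s :: (mid ++ [(e.1 - 1, e.2 + 1)]))
        = (s.1 - 1, s.2 - 1) :: (mid ++ [(e.1 - 1, e.2 + 1)]) from rfl]
    rw [show bl ((s.1 - 1, s.2 - 1) :: (mid ++ [(e.1 - 1, e.2 + 1)]))
        = ((s.1 - 1, s.2 - 1) :: mid) ++ [(e.1 - 1 + 1, e.2 + 1 - 1)] from by
      rw [← List.cons_append, bl_concat]]
    rw [show bh (((s.1 - 1, s.2 - 1) :: mid) ++ [(e.1 - 1 + 1, e.2 + 1 - 1)])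
        = (s.1 - 1 + 1, s.2 - 1 + 1) :: (mid ++ [(e.1 - 1 + 1, e.2 + 1 - 1)]) from rfl]
    simp

end GF6
namespace GF6

/-- peel counting identity -/
lemma M5 (n : ℕ) : cU (n + 1) = cA n + cV n + cR n + cAA n := by
  classical
  haveI hf : Finite {q : List (ℤ × ℤ) // IsArch (n + 1) q ∧ SU q} :=
    ((finite_exc (n + 1)).subset (fun q hq => arch_exc hq.1)).to_subtype
  haveI h1 : Finite {q : List (ℤ × ℤ) // (IsArch (n + 1) q ∧ SU q) ∧ H1 q} :=
    finite_subtype_and _ _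
  haveI h2 : Finite {q : List (ℤ × ℤ) // (IsArch (n + 1) q ∧ SU q) ∧ ¬ H1 q} :=
    finite_subtype_and _ _
  rw [cU, card_split (fun q => IsArch (n + 1) q ∧ SU q) H1,
      card_split (fun q => (IsArch (n + 1) q ∧ SU q) ∧ H1 q) L1,
      card_split (fun q => (IsArch (n + 1) q ∧ SU q) ∧ ¬ H1 q) L1]
  have e1 : Nat.card {p : List (ℤ × ℤ) // ((IsArch (n + 1) p ∧ SU p) ∧ H1 p) ∧ L1 p}
      = cA n := (Nat.card_congr (Eff n)).symm
  have e2 : Nat.card {p : List (ℤ × ℤ) // ((IsArch (n + 1) p ∧ SU p) ∧ H1 p) ∧ ¬ L1 p}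
      = cR n := (Nat.card_congr (Eft n)).symm
  have e3 : Nat.card {p : List (ℤ × ℤ) // ((IsArch (n + 1) p ∧ SU p) ∧ ¬ H1 p) ∧ L1 p}
      = cV n := (Nat.card_congr (Etf n)).symm
  have e4 : Nat.card {p : List (ℤ × ℤ) // ((IsArch (n + 1) p ∧ SU p) ∧ ¬ H1 p) ∧ ¬ L1 p}
      = cAA n := (Nat.card_congr (Ett n)).symm
  rw [e1, e2, e3, e4]
  omega

end GF6
namespace GF6

open PowerSeries

noncomputable def qa (n : ℕ) : ℚ := (cA n : ℚ)
noncomputable def qe (n : ℕ) : ℚ := (cE n : ℚ)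
noncomputable def qu (n : ℕ) : ℚ := (cU n : ℚ)
noncomputable def qarch (n : ℕ) : ℚ := (cArch n : ℚ)
noncomputable def qr (n : ℕ) : ℚ := (cR n : ℚ)
noncomputable def qv (n : ℕ) : ℚ := (cV n : ℚ)
noncomputable def qaa (n : ℕ) : ℚ := (cAA n : ℚ)

lemma qa_zero : qa 0 = 1 := by simp [qa, cA_zero]
lemma qe_zero : qe 0 = 0 := by simp [qe, cE_zero]
lemma qu_zero : qu 0 = 0 := by simp [qu, cU_zero]
lemma qr_zero : qr 0 = 0 := by simp [qr, cR_zero]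
lemma qv_zero : qv 0 = 0 := by simp [qv, cV_zero]
lemma qaa_zero : qaa 0 = 0 := by simp [qaa, cAA_zero]

lemma qa_eq (n : ℕ) : qa n = (if n = 0 then 1 else 0) + qe n := by
  unfold qa qe
  rcases eq_or_ne n 0 with rfl | h
  · simp [cA_zero, cE_zero]
  · rw [if_neg h, zero_add, cA_eq n, if_neg h]
    push_cast
    ring

lemma qarch_eq (n : ℕ) : qarch n = qu n + (if n = 1 then 1 else 0) := by
  unfold qarch qu
  rcases eq_or_ne n 1 with rfl | h
  · rw [if_pos rfl, cArch_eq 1, if_pos rfl]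
    push_cast
    ring
  · rw [if_neg h, cArch_eq n, if_neg h]
    push_cast
    ring

lemma QI1 (n : ℕ) : qe n = (∑ k ∈ Finset.range n, qarch k * qe (n - k)) + qarch n := by
  unfold qe qarch
  exact_mod_cast congrArg (fun t : ℕ => (t : ℚ)) (M1 n)

lemma QI2 (n : ℕ) : qr n = (∑ k ∈ Finset.range n, qarch k * qr (n - k)) + qu n := by
  unfold qr qarch qu
  exact_mod_cast congrArg (fun t : ℕ => (t : ℚ)) (M2 n)

lemma QI3 (n : ℕ) : qv n = (∑ k ∈ Finset.range n, qu k * qe (n - k)) + qu n := by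
  unfold qv qu qe
  exact_mod_cast congrArg (fun t : ℕ => (t : ℚ)) (M3 n)

lemma QI4 (n : ℕ) : qaa n = (∑ k ∈ Finset.range n, qu k * qr (n - k)) + qu n := by
  unfold qaa qu qr
  exact_mod_cast congrArg (fun t : ℕ => (t : ℚ)) (M4 n)

lemma QI5 (n : ℕ) : qu (n + 1) = qa n + qv n + qr n + qaa n := by
  unfold qu qa qv qr qaa
  exact_mod_cast congrArg (fun t : ℕ => (t : ℚ)) (M5 n)

lemma S1 (n : ℕ) : ∑ k ∈ Finset.range (n + 1), qu k * qa (n - k)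
    = (∑ k ∈ Finset.range n, qu k * qe (n - k)) + qu n := by
  rw [Finset.sum_range_succ, Nat.sub_self, qa_zero, mul_one]
  congr 1
  apply Finset.sum_congr rfl
  intro k hk
  have h : n - k ≠ 0 := by
    have := Finset.mem_range.mp hk
    omega
  rw [qa_eq (n - k), if_neg h, zero_add]

lemma S2 (n : ℕ) (g : ℕ → ℚ) (hg : g 0 = 0) :
    ∑ k ∈ Finset.range n, qarch k * g (n - k)
      = (∑ k ∈ Finset.range n, qu k * g (n - k)) + g (n - 1) := by
  classical
  have h : ∀ k ∈ Finset.range n,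
      qarch k * g (n - k) = qu k * g (n - k) + (if k = 1 then g (n - k) else 0) := by
    intro k hk
    rw [qarch_eq k]
    by_cases hk1 : k = 1 <;> simp [hk1] <;> ring
  rw [Finset.sum_congr rfl h, Finset.sum_add_distrib]
  congr 1
  rw [Finset.sum_ite_eq' (Finset.range n) 1 (fun k => g (n - k))]
  by_cases h1 : 1 ∈ Finset.range n
  · rw [if_pos h1]
  · rw [if_neg h1]
    have : n = 0 ∨ n = 1 := by
      rw [Finset.mem_range] at h1
      omega
    rcases this with rfl | rfl
    · simpa using hg.symm
    · simpa using hg.symm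

lemma S3 (n : ℕ) (g : ℕ → ℚ) (hg : g 0 = 0) :
    ∑ k ∈ Finset.range (n + 1), qu k * g (n - k)
      = ∑ k ∈ Finset.range n, qu k * g (n - k) := by
  rw [Finset.sum_range_succ, Nat.sub_self, hg, mul_zero, add_zero]

noncomputable def Pq : PowerSeries ℚ := PowerSeries.mk qa
noncomputable def Uq : PowerSeries ℚ := PowerSeries.mk qu
noncomputable def Rq : PowerSeries ℚ := PowerSeries.mk qr
noncomputable def Vq : PowerSeries ℚ := PowerSeries.mk qv
noncomputable def Aq : PowerSeries ℚ := PowerSeries.mk qaa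

lemma coeff_mul_mk (f g : ℕ → ℚ) (n : ℕ) :
    (PowerSeries.coeff n) (PowerSeries.mk f * PowerSeries.mk g)
      = ∑ k ∈ Finset.range (n + 1), f k * g (n - k) := by
  rw [PowerSeries.coeff_mul, Finset.Nat.sum_antidiagonal_eq_sum_range_succ_mk]
  simp [PowerSeries.coeff_mk]

lemma coeff_X_mul' (f : PowerSeries ℚ) (n : ℕ) :
    (PowerSeries.coeff n) (PowerSeries.X * f)
      = if n = 0 then 0 else (PowerSeries.coeff (n - 1)) f := by
  cases n with
  | zero =>
    simp [PowerSeries.coeff_zero_eq_constantCoeff, map_mul]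
  | succ m =>
    simp [PowerSeries.coeff_succ_X_mul]

lemma I1 : Pq = 1 + PowerSeries.X * Pq + Uq * Pq := by
  ext n
  rw [Pq, Uq]
  rw [map_add, map_add, coeff_mul_mk, coeff_X_mul', PowerSeries.coeff_one,
    PowerSeries.coeff_mk]
  cases n with
  | zero => simp [qa_zero, qu_zero]
  | succ m =>
    rw [if_neg (by omega), if_neg (by omega)]
    have hm : (m + 1) - 1 = m := by omega
    rw [hm, PowerSeries.coeff_mk]
    rw [S1 (m + 1), qa_eq (m + 1), if_neg (by omega), zero_add,
      QI1 (m + 1), S2 (m + 1) qe qe_zero, qarch_eq (m + 1), qa_eq m]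
    have hm2 : (m + 1) - 1 = m := by omega
    rw [hm2]
    by_cases h0 : m = 0
    · subst h0
      simp only [if_true]
      ring
    · rw [if_neg h0, if_neg (by omega : ¬ m + 1 = 1)]
      ring

lemma I2 : Rq = PowerSeries.X * Rq + Uq * Rq + Uq := by
  ext n
  rw [Rq, Uq]
  rw [map_add, map_add, coeff_mul_mk, coeff_X_mul', PowerSeries.coeff_mk,
    PowerSeries.coeff_mk]
  cases n with
  | zero => simp [qr_zero, qu_zero]
  | succ m =>
    rw [if_neg (by omega)]
    have hm : (m + 1) - 1 = m := by omega
    rw [hm, PowerSeries.coeff_mk]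
    rw [S3 (m + 1) qr qr_zero, QI2 (m + 1), S2 (m + 1) qr qr_zero]
    rw [hm]
    ring

lemma I3 : Vq = Uq * Pq := by
  ext n
  rw [Vq, Uq, Pq, coeff_mul_mk, PowerSeries.coeff_mk]
  rw [S1 n, QI3 n]

lemma I4 : Aq = Uq * Rq + Uq := by
  ext n
  rw [Aq, Uq, Rq]
  rw [map_add, coeff_mul_mk, PowerSeries.coeff_mk, PowerSeries.coeff_mk]
  rw [S3 n qr qr_zero, QI4 n]

lemma I5 : Uq = PowerSeries.X * (Pq + Vq + Rq + Aq) := by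
  ext n
  rw [Uq, coeff_X_mul', PowerSeries.coeff_mk]
  cases n with
  | zero => simp [qu_zero]
  | succ m =>
    rw [if_neg (by omega)]
    have hm : (m + 1) - 1 = m := by omega
    rw [hm, map_add, map_add, map_add]
    rw [Pq, Vq, Rq, Aq, PowerSeries.coeff_mk, PowerSeries.coeff_mk,
      PowerSeries.coeff_mk, PowerSeries.coeff_mk]
    exact QI5 m

end GF6
open GF6 in
theorem gf_L_S6 (P s : PowerSeries ℚ)
    (hP : ∀ n : ℕ, PowerSeries.coeff n P =
      if n = 0 then 1
      else (Nat.card {p : List (ℤ × ℤ) // IsPath S6 n p} : ℚ))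
    (hs0 : PowerSeries.constantCoeff s = 1)
    (hs2 : s ^ 2 = (1 - PowerSeries.X) * (1 - 11 * PowerSeries.X + 7 * PowerSeries.X ^ 2 - PowerSeries.X ^ 3)) :
    2 * PowerSeries.X * (PowerSeries.X - 2) ^ 2 * P = 1 + 2 * PowerSeries.X - PowerSeries.X ^ 2 - s := by
  have hPP : P = Pq := by
    ext n
    rw [hP n, Pq, PowerSeries.coeff_mk]
    rcases eq_or_ne n 0 with rfl | h
    · rw [if_pos rfl, qa_zero]
    · rw [if_neg h]
      unfold qa cA
      have : Nat.card {p : List (ℤ × ℤ) // IsPath S6 n p}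
          = Nat.card {p : List (ℤ × ℤ) // Exc n p} :=
        card_iff (fun p => (exc_iff_isPath (n := n) (p := p)).symm)
      rw [this]
  rw [hPP]
  have h1 := I1
  have h2 := I2
  have h3 := I3
  have h4 := I4
  have h5 := I5
  set X := PowerSeries.X (R := ℚ) with hX
  have hQ : X * (X - 2) ^ 2 * Pq ^ 2 - (1 + 2 * X - X ^ 2) * Pq + 1 = 0 := by
    linear_combination
      (-(X * Pq ^ 2 * (1 + Uq)) + (-1 + Pq * Uq + 3 * X * Pq - X ^ 2 * Pq)) * h1
      + (-(X * Pq ^ 2 * (1 + Uq))) * h2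
      + (-(X * Pq ^ 2 * (1 - X - Uq))) * h3
      + (-(X * Pq ^ 2 * (1 - X - Uq))) * h4
      + (-(Pq ^ 2 * (1 - X - Uq))) * h5
  have key : ((1 : PowerSeries ℚ) + 2 * X - X ^ 2 - 2 * X * (X - 2) ^ 2 * Pq - s) *
      ((1 : PowerSeries ℚ) + 2 * X - X ^ 2 - 2 * X * (X - 2) ^ 2 * Pq + s) = 0 := by
    linear_combination (4 * X * (X - 2) ^ 2) * hQ - hs2
  rcases mul_eq_zero.mp key with h | h
  · linear_combination -h
  · exfalso
    have hc := congrArg (PowerSeries.constantCoeff) h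
    simp only [map_add, map_sub, map_mul, map_pow, map_one, map_ofNat,
      PowerSeries.constantCoeff_X, hs0, hX] at hc
    norm_num at hc
end

section
/- Let Q_{S5}(x) = 1 + Σ_{n≥1} |A_{S5}(n)| xⁿ be the formal power series in x over ℚ counting the paths in A_{S5}(n). Then 2x(x−2) · Q_{S5}(x) = −1 + √(1−8x+12x²−4x³), where the square root denotes the unique formal power series with constant term 1 whose square is 1−8x+12x²−4x³. -/
namespace GF

lemma S5.fst_pos {s : ℤ × ℤ} (h : s ∈ S5) : 1 ≤ s.1 := by
  rcases h with h | h | ⟨r, hr, h⟩ <;> subst h <;> simp <;> omega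

lemma S5.snd_cases {s : ℤ × ℤ} (h : s ∈ S5) : s.2 = 1 ∨ s.2 = -1 ∨ s.2 = 0 := by
  rcases h with h | h | ⟨r, hr, h⟩ <;> subst h <;> simp

lemma S5.eq_down {s : ℤ × ℤ} (h : s ∈ S5) (h2 : s.2 < 0) : s = (1, -1) := by
  rcases h with h | h | ⟨r, hr, h⟩ <;> subst h <;> simp_all

lemma S5.even_add {s : ℤ × ℤ} (h : s ∈ S5) : Even (s.1 + s.2) := by
  rcases h with h | h | ⟨r, hr, h⟩ <;> subst h
  · exact ⟨1, rfl⟩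
  · exact ⟨0, by ring⟩
  · exact ⟨r, by ring⟩

lemma up_mem : ((1:ℤ), (1:ℤ)) ∈ S5 := Or.inl rfl
lemma down_mem : ((1:ℤ), (-1:ℤ)) ∈ S5 := Or.inr (Or.inl rfl)

/-- sum of a list of even integers is even -/
lemma sum_even : ∀ l : List ℤ, (∀ x ∈ l, Even x) → Even l.sum := by
  intro l hl
  induction l with
  | nil => simp
  | cons a t ih =>
    simp only [List.sum_cons]
    exact (hl a (by simp)).add (ih fun x hx => hl x (by simp [hx]))

lemma length_le_sum : ∀ l : List ℤ, (∀ x ∈ l, 1 ≤ x) → (l.length : ℤ) ≤ l.sum := by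
  intro l hl
  induction l with
  | nil => simp
  | cons a t ih =>
    simp only [List.sum_cons, List.length_cons]
    have := hl a (by simp)
    have := ih fun x hx => hl x (by simp [hx])
    push_cast
    omega

lemma prefix_split {α : Type*} {q a b : List α} (h : q <+: a ++ b) :
    q <+: a ∨ ∃ q', q = a ++ q' ∧ q' <+: b := by
  rcases List.prefix_or_prefix_of_prefix h (List.prefix_append a b) with h1 | h1
  · exact Or.inl h1
  · obtain ⟨q', rfl⟩ := h1
    obtain ⟨t, ht⟩ := h
    rw [List.append_assoc] at ht
    exact Or.inr ⟨q', rfl, ⟨t, (List.append_cancel_left ht)⟩⟩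

/-- first-passage decomposition: split a list at the first time the running sum
of second coordinates, started from `h`, goes negative. -/
def dec : ℤ → List (ℤ × ℤ) → List (ℤ × ℤ) × List (ℤ × ℤ)
  | _, [] => ([], [])
  | h, s :: t =>
    if h + s.2 < 0 then ([], t)
    else (s :: (dec (h + s.2) t).1, (dec (h + s.2) t).2)

lemma dec_eq (d : ℤ × ℤ) (r : List (ℤ × ℤ)) :
    ∀ (m : List (ℤ × ℤ)) (h : ℤ),
    (∀ q, q <+: m → 0 ≤ h + (q.map Prod.snd).sum) →
    h + (m.map Prod.snd).sum + d.2 < 0 →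
    dec h (m ++ d :: r) = (m, r) := by
  intro m
  induction m with
  | nil =>
    intro h _ hd
    simp only [List.nil_append, dec]
    rw [if_pos (by simpa using hd)]
  | cons a t ih =>
    intro h hpre hd
    have h1 : 0 ≤ h + a.2 := by simpa using hpre [a] ⟨t, rfl⟩
    simp only [List.cons_append, dec]
    rw [if_neg (by omega)]
    have := ih (h + a.2)
      (fun q hq => by
        have hq' : a :: q <+: a :: t := by
          obtain ⟨w, hw⟩ := hq; exact ⟨w, by simp [hw]⟩
        have := hpre (a :: q) hq'
        simp at this; omega)
      (by simp at hd ⊢; omega)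
    rw [this]

lemma dec_spec : ∀ (t : List (ℤ × ℤ)) (h : ℤ), 0 ≤ h →
    h + (t.map Prod.snd).sum < 0 →
    ∃ d, t = (dec h t).1 ++ d :: (dec h t).2 ∧
      (∀ q, q <+: (dec h t).1 → 0 ≤ h + (q.map Prod.snd).sum) ∧
      h + ((dec h t).1.map Prod.snd).sum + d.2 < 0 := by
  intro t
  induction t with
  | nil => intro h h0 hneg; simp at hneg; omega
  | cons a t ih =>
    intro h h0 hneg
    by_cases hc : h + a.2 < 0
    · refine ⟨a, ?_, ?_, ?_⟩
      · simp [dec, hc]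
      · simp only [dec, if_pos hc]
        intro q hq; rw [List.prefix_nil.mp hq]; simpa
      · simp [dec, hc]
    · obtain ⟨d, hd1, hd2, hd3⟩ := ih (h + a.2) (by omega) (by simp at hneg ⊢; omega)
      refine ⟨d, ?_, ?_, ?_⟩
      · simp only [dec, if_neg hc, List.cons_append]
        exact congrArg _ hd1
      · simp only [dec, if_neg hc]
        intro q hq
        rcases q with _ | ⟨b, q'⟩
        · simpa
        · obtain ⟨w, hw⟩ := hq
          simp only [List.cons_append, List.cons.injEq] at hw
          obtain ⟨hb, hw2⟩ := hw
          subst hb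
          have := hd2 q' ⟨w, hw2⟩; simp; omega
      · simp only [dec, if_neg hc]
        simp at hd3 ⊢; omega

end GF

namespace GF2
open GF

abbrev Lp (n : ℕ) : Type := {p : List (ℤ × ℤ) // IsPath S5 n p}
abbrev Ap (n : ℕ) : Type := {p : List (ℤ × ℤ) // IsPath S5 n p ∧ NoFlatOnAxis p}

lemma finite_isPath (n : ℕ) : {p : List (ℤ × ℤ) | IsPath S5 n p}.Finite := by
  classical
  set T : Set (ℤ × ℤ) := Set.Icc ((1 : ℤ), (-1 : ℤ)) ((2 * n : ℤ), (1 : ℤ)) with hT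
  have hTfin : T.Finite := Set.finite_Icc _ _
  haveI := hTfin.to_subtype
  have himg : ((fun l : List T => l.map Subtype.val) ''
      {l : List T | l.length ≤ 2 * n}).Finite :=
    (List.finite_length_le _ _).image _
  apply himg.subset
  rintro p ⟨hmem, hfst, hsnd, hpre⟩
  have hstep : ∀ s ∈ p, s ∈ T := by
    intro s hs
    have h1 := S5.fst_pos (hmem s hs)
    have hc := S5.snd_cases (hmem s hs)
    have hle : s.1 ≤ (p.map Prod.fst).sum := by
      apply List.single_le_sum
      · intro x hx
        simp only [List.mem_map] at hx
        obtain ⟨y, hy, rfl⟩ := hx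
        have := S5.fst_pos (hmem y hy); omega
      · exact List.mem_map_of_mem hs
    constructor <;> constructor <;> simp <;> omega
  have hlen : p.length ≤ 2 * n := by
    have := length_le_sum (p.map Prod.fst) (by
      intro x hx
      simp only [List.mem_map] at hx
      obtain ⟨y, hy, rfl⟩ := hx
      exact S5.fst_pos (hmem y hy))
    simp only [List.length_map] at this
    omega
  refine ⟨p.pmap (fun s hs => (⟨s, hs⟩ : T)) hstep, ?_, ?_⟩
  · simp [List.length_pmap, hlen]
  · simp [List.map_pmap]

instance Lp.finite (n : ℕ) : Finite (Lp n) := (finite_isPath n).to_subtype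

instance Ap.finite (n : ℕ) : Finite (Ap n) :=
  Set.Finite.to_subtype ((finite_isPath n).subset (fun p hp => hp.1))

lemma isPath_zero_iff (p : List (ℤ × ℤ)) : IsPath S5 0 p ↔ p = [] := by
  constructor
  · rintro ⟨hmem, hfst, -, -⟩
    rcases p with _ | ⟨a, t⟩
    · rfl
    · exfalso
      have := length_le_sum ((a :: t).map Prod.fst) (by
        intro x hx
        simp only [List.mem_map] at hx
        obtain ⟨y, hy, rfl⟩ := hx
        exact S5.fst_pos (hmem y hy))
      simp at this hfst
      omega
  · rintro rfl
    refine ⟨by simp, by simp, by simp, ?_⟩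
    intro q hq
    rw [List.prefix_nil.mp hq]; simp

lemma noFlat_nil : NoFlatOnAxis [] := by
  intro q s hq
  exfalso
  have := hq.length_le
  simp at this

lemma card_Lp_zero : Nat.card (Lp 0) = 1 := by
  haveI : Unique (Lp 0) := by
    refine ⟨⟨⟨[], (isPath_zero_iff []).mpr rfl⟩⟩, ?_⟩
    rintro ⟨p, hp⟩
    exact Subtype.ext ((isPath_zero_iff p).mp hp)
  exact Nat.card_unique

lemma card_Ap_zero : Nat.card (Ap 0) = 1 := by
  haveI : Unique (Ap 0) := by
    refine ⟨⟨⟨[], (isPath_zero_iff []).mpr rfl, noFlat_nil⟩⟩, ?_⟩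
    rintro ⟨p, hp, -⟩
    exact Subtype.ext ((isPath_zero_iff p).mp hp)
  exact Nat.card_unique

end GF2


namespace GF3
open GF GF2

lemma prefix_cons_cases {α : Type*} {q : List α} {a : α} {t : List α} (h : q <+: a :: t) :
    q = [] ∨ ∃ q', q = a :: q' ∧ q' <+: t := by
  rcases q with _ | ⟨b, q'⟩
  · exact Or.inl rfl
  · rw [List.cons_prefix_iff] at h
    obtain ⟨l', hl, hq⟩ := h
    obtain ⟨rfl, rfl⟩ := List.cons.inj hl
    exact Or.inr ⟨q', rfl, hq⟩

lemma sum_map_add (m : List (ℤ × ℤ)) :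
    (m.map (fun s => s.1 + s.2)).sum = (m.map Prod.fst).sum + (m.map Prod.snd).sum := by
  induction m with
  | nil => simp
  | cons a t ih => simp [ih]; ring

/-- the constructed path `U :: m ++ D :: r` is a path. -/
lemma isPath_up_down {k j : ℕ} {m r : List (ℤ × ℤ)}
    (hm : IsPath S5 k m) (hr : IsPath S5 j r) :
    IsPath S5 (k + j + 1) ((1, 1) :: m ++ (1, -1) :: r) := by
  obtain ⟨hm1, hm2, hm3, hm4⟩ := hm
  obtain ⟨hr1, hr2, hr3, hr4⟩ := hr
  refine ⟨?_, ?_, ?_, ?_⟩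
  · intro s hs
    simp only [List.cons_append, List.mem_cons, List.mem_append] at hs
    rcases hs with rfl | hs | rfl | hs
    · exact up_mem
    · exact hm1 s hs
    · exact down_mem
    · exact hr1 s hs
  · simp only [List.cons_append, List.map_cons, List.map_append, List.sum_cons,
      List.sum_append, hm2, hr2]
    push_cast; ring
  · simp only [List.cons_append, List.map_cons, List.map_append, List.sum_cons,
      List.sum_append, hm3, hr3]
    ring
  · intro q hq
    rw [List.cons_append] at hq
    rcases prefix_cons_cases hq with rfl | ⟨q', rfl, hq'⟩
    · simp
    · rcases prefix_split hq' with h1 | ⟨w, rfl, hw⟩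
      · have := hm4 q' h1
        simp only [List.map_cons, List.sum_cons]
        omega
      · rcases prefix_cons_cases hw with rfl | ⟨w', rfl, hw'⟩
        · simp [hm3]
        · have := hr4 w' hw'
          simp only [List.map_cons, List.map_append, List.sum_cons, List.sum_append, hm3]
          omega

/-- first-return decomposition of a path starting with an up-step. -/
lemma decompose {n : ℕ} {t : List (ℤ × ℤ)} (hp : IsPath S5 n ((1, 1) :: t)) :
    ∃ (k j : ℕ) (m r : List (ℤ × ℤ)), k + j + 1 = n ∧ t = m ++ (1, -1) :: r ∧
      IsPath S5 k m ∧ IsPath S5 j r := by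
  obtain ⟨hp1, hp2, hp3, hp4⟩ := hp
  simp only [List.map_cons, List.sum_cons] at hp2 hp3
  have hneg : (0 : ℤ) + (t.map Prod.snd).sum < 0 := by omega
  obtain ⟨d, ht, hmpre, hdneg⟩ := dec_spec t 0 le_rfl hneg
  set m := (dec 0 t).1 with hm
  set r := (dec 0 t).2 with hr
  have hmem_t : ∀ s ∈ t, s ∈ S5 := fun s hs => hp1 s (by simp [hs])
  have hd5 : d ∈ S5 := hmem_t d (by rw [ht]; simp)
  have hmnn : 0 ≤ (m.map Prod.snd).sum := by simpa using hmpre m ⟨[], by simp⟩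
  have hd : d = (1, -1) := S5.eq_down hd5 (by omega)
  subst hd
  have hmsum : (m.map Prod.snd).sum = 0 := by simp at hdneg; omega
  -- sums along t
  have hsums : (t.map Prod.fst).sum = (m.map Prod.fst).sum + 1 + (r.map Prod.fst).sum ∧
      (t.map Prod.snd).sum = (m.map Prod.snd).sum + (-1) + (r.map Prod.snd).sum := by
    rw [ht]; constructor <;> simp <;> ring
  have hrsum : (r.map Prod.snd).sum = 0 := by omega
  -- nonneg and evenness of fst sums
  have hmem_m : ∀ s ∈ m, s ∈ S5 := fun s hs => hmem_t s (by rw [ht]; simp [hs])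
  have hmem_r : ∀ s ∈ r, s ∈ S5 := fun s hs => hmem_t s (by rw [ht]; simp [hs])
  have hmfst_nn : (0:ℤ) ≤ (m.map Prod.fst).sum := by
    have := length_le_sum (m.map Prod.fst) (by
      intro x hx; simp only [List.mem_map] at hx
      obtain ⟨y, hy, rfl⟩ := hx; exact S5.fst_pos (hmem_m y hy))
    have : (0:ℤ) ≤ ((m.map Prod.fst).length : ℤ) := by positivity
    omega
  have hrfst_nn : (0:ℤ) ≤ (r.map Prod.fst).sum := by
    have := length_le_sum (r.map Prod.fst) (by
      intro x hx; simp only [List.mem_map] at hx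
      obtain ⟨y, hy, rfl⟩ := hx; exact S5.fst_pos (hmem_r y hy))
    have : (0:ℤ) ≤ ((r.map Prod.fst).length : ℤ) := by positivity
    omega
  have hmeven : Even ((m.map Prod.fst).sum) := by
    have h1 : Even ((m.map (fun s => s.1 + s.2)).sum) := by
      apply sum_even
      intro x hx; simp only [List.mem_map] at hx
      obtain ⟨y, hy, rfl⟩ := hx; exact S5.even_add (hmem_m y hy)
    rw [sum_map_add, hmsum, add_zero] at h1
    exact h1
  obtain ⟨c, hc⟩ := hmeven
  obtain ⟨k, hk⟩ : ∃ k : ℕ, (m.map Prod.fst).sum = 2 * (k:ℤ) := ⟨c.toNat, by omega⟩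
  have hreven : (r.map Prod.fst).sum = 2 * ((n:ℤ) - k - 1) := by omega
  have hkn : (k:ℤ) ≤ (n:ℤ) - 1 := by omega
  obtain ⟨j, hj⟩ : ∃ j : ℕ, (r.map Prod.fst).sum = 2 * (j:ℤ) ∧ (k + j + 1 : ℕ) = n :=
    ⟨n - k - 1, by constructor <;> [skip; omega] <;> rw [hreven] <;> push_cast <;> omega⟩
  refine ⟨k, j, m, r, hj.2, ht, ⟨hmem_m, hk, hmsum, ?_⟩, ⟨hmem_r, hj.1, hrsum, ?_⟩⟩
  · intro q hq; simpa using hmpre q hq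
  · intro q hq
    have hq' : (1, 1) :: (m ++ (1, -1) :: q) <+: (1, 1) :: t := by
      obtain ⟨w, hw⟩ := hq
      exact ⟨w, by rw [ht, ← hw]; simp⟩
    have := hp4 _ hq'
    simp only [List.map_cons, List.map_append, List.sum_cons, List.sum_append, hmsum] at this
    omega

end GF3

namespace GF4
open GF GF2 GF3

/-- uniqueness of the first-return decomposition -/
lemma ud_inj {m1 r1 m2 r2 : List (ℤ × ℤ)}
    (hpre1 : ∀ q, q <+: m1 → 0 ≤ (q.map Prod.snd).sum)
    (hsum1 : (m1.map Prod.snd).sum = 0)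
    (hpre2 : ∀ q, q <+: m2 → 0 ≤ (q.map Prod.snd).sum)
    (hsum2 : (m2.map Prod.snd).sum = 0)
    (h : m1 ++ (1, -1) :: r1 = m2 ++ (1, -1) :: r2) : m1 = m2 ∧ r1 = r2 := by
  have e1 : dec 0 (m1 ++ (1, -1) :: r1) = (m1, r1) :=
    dec_eq _ _ m1 0 (fun q hq => by simpa using hpre1 q hq) (by simp [hsum1])
  have e2 : dec 0 (m2 ++ (1, -1) :: r2) = (m2, r2) :=
    dec_eq _ _ m2 0 (fun q hq => by simpa using hpre2 q hq) (by simp [hsum2])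
  rw [h, e2] at e1
  exact ⟨(Prod.ext_iff.mp e1.symm).1, (Prod.ext_iff.mp e1.symm).2⟩

lemma noFlat_up_down {m r : List (ℤ × ℤ)}
    (hmpre : ∀ q, q <+: m → 0 ≤ (q.map Prod.snd).sum)
    (hmsum : (m.map Prod.snd).sum = 0)
    (hr : NoFlatOnAxis r) : NoFlatOnAxis ((1, 1) :: m ++ (1, -1) :: r) := by
  intro q s hq hs0
  rw [List.cons_append] at hq
  rcases prefix_cons_cases hq with h' | ⟨q', hq1, hq'⟩
  · simp at h'
  · rcases q with _ | ⟨b, q''⟩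
    · simp only [List.nil_append, List.cons.injEq] at hq1
      rw [hq1.1] at hs0; simp at hs0
    · rw [List.cons_append] at hq1
      obtain ⟨hb, hqq⟩ := List.cons.inj hq1
      subst hb
      subst hqq
      rcases prefix_split hq' with h1 | ⟨w, hw, hw'⟩
      · -- inside m : height ≥ 1
        have hq''m : q'' <+: m := ((List.prefix_append q'' [s]).trans h1)
        have := hmpre q'' hq''m
        simp only [List.map_cons, List.sum_cons]
        omega
      · rcases prefix_cons_cases hw' with rfl | ⟨w', rfl, hww⟩
        · -- q'' ++ [s] = m ++ [] : inside m again
          rw [List.append_nil] at hw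
          have hq''m : q'' <+: m := (hw ▸ List.prefix_append q'' [s]).trans (List.prefix_refl m)
          have := hmpre q'' (by rw [← hw]; exact List.prefix_append q'' [s])
          simp only [List.map_cons, List.sum_cons]
          omega
        · -- q'' ++ [s] = m ++ (1,-1) :: w'
          rcases List.eq_nil_or_concat w' with rfl | ⟨w'', s', rfl⟩
          · -- s = (1,-1), contradiction with hs0
            have : q'' = m ∧ [s] = [(1, -1)] :=
              List.append_inj' hw rfl
            have hsd : s = (1, -1) := by simpa using this.2
            rw [hsd] at hs0; simp at hs0
          · -- s' = s is a flat step inside r with prefix w''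
            have hW : q'' ++ [s] = (m ++ (1, -1) :: w'') ++ [s'] := by
              rw [hw]; simp
            have h2 : q'' = m ++ (1, -1) :: w'' ∧ [s] = [s'] :=
              List.append_inj' hW rfl
            have hs' : s' = s := by simpa using h2.2.symm
            have hwr : w'' ++ [s] <+: r := by
              simpa [List.concat_eq_append, hs'] using hww
            have := hr w'' s hwr hs0
            rw [h2.1]
            simp only [List.map_append, List.map_cons, List.sum_append, List.sum_cons, hmsum]
            omega

lemma noFlat_of_decomp {m r : List (ℤ × ℤ)}
    (hflat : NoFlatOnAxis ((1, 1) :: m ++ (1, -1) :: r))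
    (hmsum : (m.map Prod.snd).sum = 0) : NoFlatOnAxis r := by
  intro q s hq hs0
  have hpre : ((1, 1) :: m ++ (1, -1) :: q) ++ [s] <+: (1, 1) :: m ++ (1, -1) :: r := by
    obtain ⟨w, hw⟩ := hq
    exact ⟨w, by rw [← hw]; simp⟩
  have := hflat _ s hpre hs0
  simp only [List.cons_append, List.map_cons, List.map_append, List.sum_cons,
    List.sum_append, hmsum] at this
  omega

end GF4

namespace GF5
open GF GF2 GF3 GF4

lemma nat_card_sigma {m : ℕ} (β : Fin m → Type) [∀ i, Finite (β i)] :
    Nat.card ((i : Fin m) × β i) = ∑ i : Fin m, Nat.card (β i) := by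
  haveI : ∀ i, Fintype (β i) := fun i => Fintype.ofFinite _
  simp [Nat.card_eq_fintype_card]

def gA (n : ℕ) (x : (i : Fin (n + 1)) × (Lp i × Ap (n - i))) : Ap (n + 1) :=
  ⟨((1, 1) :: x.2.1.1) ++ ((1, -1) :: x.2.2.1), by
    obtain ⟨i, ⟨m, hm⟩, ⟨r, hr⟩⟩ := x
    constructor
    · have h1 := isPath_up_down hm hr.1
      have he : i.1 + (n - i.1) + 1 = n + 1 := by have := i.isLt; omega
      rwa [he] at h1
    · exact noFlat_up_down hm.2.2.2 hm.2.2.1 hr.2⟩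

lemma gA_bij (n : ℕ) : Function.Bijective (gA n) := by
  constructor
  · rintro ⟨i1, ⟨m1, hm1⟩, ⟨r1, hr1⟩⟩ ⟨i2, ⟨m2, hm2⟩, ⟨r2, hr2⟩⟩ h
    have h' : ((1, 1) :: m1) ++ ((1, -1) :: r1) = ((1, 1) :: m2) ++ ((1, -1) :: r2) :=
      congrArg Subtype.val h
    rw [List.cons_append, List.cons_append] at h'
    have h2 := (List.cons.inj h').2
    obtain ⟨hm, hr⟩ := ud_inj hm1.2.2.2 hm1.2.2.1 hm2.2.2.2 hm2.2.2.1 h2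
    subst hm; subst hr
    have hii : (i1.1 : ℤ) = (i2.1 : ℤ) := by
      have a1 := hm1.2.1; have a2 := hm2.2.1; omega
    have hi : i1 = i2 := Fin.ext (by exact_mod_cast hii)
    subst hi
    rfl
  · rintro ⟨p, hp, hflat⟩
    rcases p with _ | ⟨s, t⟩
    · exfalso; have := hp.2.1; simp at this; omega
    · have hs5 := hp.1 s (by simp)
      rcases hs5 with rfl | rfl | ⟨r0, hr0, rfl⟩
      · obtain ⟨k, j, m, r, hkj, ht, hm, hr⟩ := decompose hp
        have hkn : k ≤ n := by omega
        have hj : j = n - k := by omega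
        subst hj
        have hval : ((1, 1) :: m) ++ ((1, -1) :: r) = (1, 1) :: t := by
          rw [ht]; simp
        have hNF : NoFlatOnAxis (((1, 1) :: m) ++ ((1, -1) :: r)) := by
          rw [hval]; exact hflat
        refine ⟨⟨⟨k, by omega⟩, ⟨m, hm⟩, ⟨r, hr, noFlat_of_decomp hNF hm.2.2.1⟩⟩, ?_⟩
        exact Subtype.ext hval
      · exfalso
        have := hp.2.2.2 [(1, -1)] ⟨t, rfl⟩
        simp at this
      · exfalso
        have := hflat [] (2 * r0, 0) ⟨t, rfl⟩ rfl
        simp at this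

lemma card_Ap_succ (n : ℕ) : Nat.card (Ap (n + 1)) =
    ∑ k ∈ Finset.range (n + 1), Nat.card (Lp k) * Nat.card (Ap (n - k)) := by
  rw [← Nat.card_eq_of_bijective _ (gA_bij n), nat_card_sigma]
  rw [← Fin.sum_univ_eq_sum_range (fun k => Nat.card (Lp k) * Nat.card (Ap (n - k))) (n + 1)]
  exact Finset.sum_congr rfl fun i _ => Nat.card_prod _ _

end GF5

namespace GF6
open GF GF2 GF3 GF4 GF5

def gL (n : ℕ) (x : ((j : Fin (n + 1)) × Lp j) ⊕ ((k : Fin (n + 1)) × (Lp k × Lp (n - k)))) :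
    Lp (n + 1) :=
  match x with
  | Sum.inl ⟨j, q⟩ =>
    ⟨(2 * ((n : ℤ) + 1 - j), 0) :: q.1, by
      obtain ⟨q, hq⟩ := q
      have hjn : (j : ℕ) ≤ n := by have := j.isLt; omega
      refine ⟨?_, ?_, ?_, ?_⟩
      · intro s hs
        rcases List.mem_cons.mp hs with rfl | hs
        · exact Or.inr (Or.inr ⟨(n : ℤ) + 1 - j, by push_cast; omega, rfl⟩)
        · exact hq.1 s hs
      · simp only [List.map_cons, List.sum_cons, hq.2.1]
        push_cast; ring
      · simp only [List.map_cons, List.sum_cons, hq.2.2.1]; ring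
      · intro w hw
        rcases prefix_cons_cases hw with rfl | ⟨w', rfl, hw'⟩
        · simp
        · have := hq.2.2.2 w' hw'
          simp only [List.map_cons, List.sum_cons]
          omega⟩
  | Sum.inr ⟨k, m, r⟩ =>
    ⟨((1, 1) :: m.1) ++ ((1, -1) :: r.1), by
      have h1 := isPath_up_down m.2 r.2
      have he : k.1 + (n - k.1) + 1 = n + 1 := by have := k.isLt; omega
      rwa [he] at h1⟩

lemma gL_bij (n : ℕ) : Function.Bijective (gL n) := by
  constructor
  · rintro (⟨j1, q1, hq1⟩ | ⟨k1, ⟨m1, hm1⟩, ⟨r1, hr1⟩⟩) (⟨j2, q2, hq2⟩ | ⟨k2, ⟨m2, hm2⟩, ⟨r2, hr2⟩⟩) h <;>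
      have h' := congrArg Subtype.val h <;> simp only [gL] at h'
    · obtain ⟨hhead, htail⟩ := List.cons.inj h'
      have hj : j1 = j2 := by
        have := congrArg Prod.fst hhead
        have hj1 := j1.isLt; have hj2 := j2.isLt
        exact Fin.ext (by omega)
      subst hj; subst htail
      rfl
    · exfalso
      have := congrArg Prod.snd (List.cons.inj h').1
      simp at this
    · exfalso
      rw [List.cons_append] at h'
      have := congrArg Prod.snd (List.cons.inj h').1
      simp at this
    · rw [List.cons_append, List.cons_append] at h'
      have h2 := (List.cons.inj h').2
      obtain ⟨hm, hr⟩ := ud_inj hm1.2.2.2 hm1.2.2.1 hm2.2.2.2 hm2.2.2.1 h2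
      subst hm; subst hr
      have hii : (k1.1 : ℤ) = (k2.1 : ℤ) := by
        have a1 := hm1.2.1; have a2 := hm2.2.1; omega
      have hk : k1 = k2 := Fin.ext (by exact_mod_cast hii)
      subst hk
      rfl
  · rintro ⟨p, hp⟩
    rcases p with _ | ⟨s, t⟩
    · exfalso; have := hp.2.1; simp at this; omega
    · have hs5 := hp.1 s (by simp)
      rcases hs5 with rfl | rfl | ⟨r0, hr0, rfl⟩
      · obtain ⟨k, j, m, r, hkj, ht, hm, hr⟩ := decompose hp
        have hkn : k ≤ n := by omega
        have hj : j = n - k := by omega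
        subst hj
        refine ⟨Sum.inr ⟨⟨k, by omega⟩, ⟨m, hm⟩, ⟨r, hr⟩⟩, ?_⟩
        apply Subtype.ext
        show ((1, 1) :: m) ++ ((1, -1) :: r) = (1, 1) :: t
        rw [ht]; simp
      · exfalso
        have := hp.2.2.2 [(1, -1)] ⟨t, rfl⟩
        simp at this
      · -- horizontal first step
        have hmem : ∀ s ∈ t, s ∈ S5 := fun s hs => hp.1 s (by simp [hs])
        have hfst := hp.2.1
        have hsnd := hp.2.2.1
        simp only [List.map_cons, List.sum_cons] at hfst hsnd
        have htnn : (0:ℤ) ≤ (t.map Prod.fst).sum := by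
          have := length_le_sum (t.map Prod.fst) (by
            intro x hx; simp only [List.mem_map] at hx
            obtain ⟨y, hy, rfl⟩ := hx; exact S5.fst_pos (hmem y hy))
          have : (0:ℤ) ≤ ((t.map Prod.fst).length : ℤ) := by positivity
          omega
        have hr0n : r0 ≤ (n:ℤ) + 1 := by omega
        obtain ⟨j, hj1, hj2⟩ : ∃ j : ℕ, j ≤ n ∧ (j : ℤ) = (n : ℤ) + 1 - r0 :=
          ⟨n + 1 - r0.toNat, by omega, by omega⟩
        refine ⟨Sum.inl ⟨⟨j, by omega⟩, ⟨t, ?_, ?_, ?_, ?_⟩⟩, ?_⟩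
        · exact hmem
        · rw [hj2]; omega
        · omega
        · intro q hq
          have : (2 * r0, 0) :: q <+: (2 * r0, 0) :: t := by
            obtain ⟨w, hw⟩ := hq; exact ⟨w, by simp [hw]⟩
          have := hp.2.2.2 _ this
          simpa using this
        · apply Subtype.ext
          show (2 * ((n : ℤ) + 1 - j), 0) :: t = (2 * r0, 0) :: t
          rw [hj2]; ring_nf
end GF6

namespace GF7
open GF GF2 GF3 GF4 GF5 GF6

lemma card_Lp_succ (n : ℕ) : Nat.card (Lp (n + 1)) =
    (∑ j ∈ Finset.range (n + 1), Nat.card (Lp j)) +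
    ∑ k ∈ Finset.range (n + 1), Nat.card (Lp k) * Nat.card (Lp (n - k)) := by
  rw [← Nat.card_eq_of_bijective _ (gL_bij n), Nat.card_sum]
  congr 1
  · rw [nat_card_sigma, ← Fin.sum_univ_eq_sum_range (fun j => Nat.card (Lp j)) (n + 1)]
  · rw [nat_card_sigma,
      ← Fin.sum_univ_eq_sum_range (fun k => Nat.card (Lp k) * Nat.card (Lp (n - k))) (n + 1)]
    exact Finset.sum_congr rfl fun i _ => Nat.card_prod _ _

end GF7

namespace GF8
open GF GF2 GF3 GF4 GF5 GF6 GF7 PowerSeries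

noncomputable def F : PowerSeries ℚ := PowerSeries.mk fun n => (Nat.card (Lp n) : ℚ)

lemma coeff_F (n : ℕ) : coeff n F = (Nat.card (Lp n) : ℚ) := coeff_mk n _

theorem main (P s : PowerSeries ℚ)
    (hP : ∀ n : ℕ, PowerSeries.coeff n P =
      if n = 0 then 1
      else (Nat.card {p : List (ℤ × ℤ) // IsPath S5 n p ∧ NoFlatOnAxis p} : ℚ))
    (hs0 : PowerSeries.constantCoeff s = 1)
    (hs2 : s ^ 2 = 1 - 8 * PowerSeries.X + 12 * PowerSeries.X ^ 2 - 4 * PowerSeries.X ^ 3) :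
    2 * PowerSeries.X * (PowerSeries.X - 2) * P = -1 + s := by
  classical
  have coeffP : ∀ j, coeff j P = (Nat.card (Ap j) : ℚ) := by
    intro j
    rw [hP]
    by_cases hj : j = 0
    · subst hj; rw [if_pos rfl, card_Ap_zero]; norm_num
    · rw [if_neg hj]
  have h1 : P = 1 + X * (F * P) := by
    ext n
    rcases n with _ | n
    · simp [coeffP 0, card_Ap_zero]
    · rw [map_add, coeff_succ_X_mul, PowerSeries.coeff_mul]
      have : ∀ ij : ℕ × ℕ, ij ∈ Finset.HasAntidiagonal.antidiagonal n →
          coeff ij.1 F * coeff ij.2 P =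
          (Nat.card (Lp ij.1) * Nat.card (Ap ij.2) : ℚ) := by
        intro ij _
        rw [coeff_F, coeffP]
      rw [Finset.sum_congr rfl this, coeffP (n + 1), card_Ap_succ,
        Finset.Nat.sum_antidiagonal_eq_sum_range_succ
          (fun i j => (Nat.card (Lp i) * Nat.card (Ap j) : ℚ))]
      rw [coeff_one, if_neg (Nat.succ_ne_zero n)]
      push_cast
      ring
  have hX0 : ∀ G : ℚ⟦X⟧, coeff 0 (X * G) = 0 := fun G => by
    rw [coeff_zero_eq_constantCoeff, map_mul, constantCoeff_X, zero_mul]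
  have coeffFF : ∀ m : ℕ, coeff m (F * F) =
      ∑ k ∈ Finset.range (m + 1), (Nat.card (Lp k) : ℚ) * (Nat.card (Lp (m - k)) : ℚ) := by
    intro m
    rw [PowerSeries.coeff_mul,
      Finset.Nat.sum_antidiagonal_eq_sum_range_succ
        (fun i j => coeff i F * coeff j F)]
    exact Finset.sum_congr rfl fun k _ => by rw [coeff_F, coeff_F]
  have h2 : F = 1 - X + X * (F + F + F * F - X * (F * F)) := by
    ext n
    rcases n with _ | n
    · rw [map_add, map_sub, hX0, coeff_F, card_Lp_zero, coeff_zero_one, coeff_zero_X]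
      norm_num
    · rw [map_add, map_sub, coeff_one, coeff_X, coeff_succ_X_mul, map_sub, map_add, map_add,
        coeff_F, coeff_F, coeffFF]
      rcases n with _ | m
      · rw [hX0, card_Lp_succ 0]
        simp [Finset.sum_range_one, card_Lp_zero]
        norm_num
      · rw [coeff_succ_X_mul, coeffFF]
        have e1 := congrArg (Nat.cast : ℕ → ℚ) (card_Lp_succ (m + 1))
        have e2 := congrArg (Nat.cast : ℕ → ℚ) (card_Lp_succ m)
        push_cast at e1 e2
        rw [Finset.sum_range_succ (fun j => (Nat.card (Lp j) : ℚ)) (m + 1)] at e1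
        simp only [Nat.add_eq_zero, and_false, if_false, OfNat.ofNat_ne_zero,
          Nat.succ_ne_zero] at *
        norm_num
        linarith [e1, e2]
  -- algebraic elimination
  have hQ : P = (1 - X) + X * (2 - X) * P ^ 2 := by
    linear_combination (X * P ^ 2) * h2 - (X * P + (1 - X) * (X * F * P - 1)) * h1
  have hu2 : (1 + 2 * X * (X - 2) * P) ^ 2 = s ^ 2 := by
    linear_combination (4 * X * (X - 2)) * hQ - hs2
  have hfac : (1 + 2 * X * (X - 2) * P - s) * (1 + 2 * X * (X - 2) * P + s) = 0 := by
    linear_combination hu2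
  have hne : (1 + 2 * X * (X - 2) * P + s) ≠ 0 := by
    intro hzero
    have := congrArg (constantCoeff) hzero
    simp only [map_add, map_mul, map_one, constantCoeff_X, hs0, map_zero] at this
    norm_num at this
  have hz : 1 + 2 * X * (X - 2) * P - s = 0 := by
    rcases mul_eq_zero.mp hfac with h | h
    · exact h
    · exact absurd h hne
  linear_combination hz

end GF8


theorem gf_A_S5 (P s : PowerSeries ℚ)
    (hP : ∀ n : ℕ, PowerSeries.coeff n P =
      if n = 0 then 1
      else (Nat.card {p : List (ℤ × ℤ) // IsPath S5 n p ∧ NoFlatOnAxis p} : ℚ))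
    (hs0 : PowerSeries.constantCoeff s = 1)
    (hs2 : s ^ 2 = 1 - 8 * PowerSeries.X + 12 * PowerSeries.X ^ 2 - 4 * PowerSeries.X ^ 3) :
    2 * PowerSeries.X * (PowerSeries.X - 2) * P = -1 + s :=
  GF8.main P s hP hs0 hs2
end
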